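/- arXiv:1511.05397 — 8 statements merged into one kernel-verified Lean document; each statement's English description precedes it below -/
import Mathlib

section
/- Suppose d_k ≥ d_k^r for every k ∈ V_R and there exist distinct vertices i, j ∈ V_R with d_i^r < d_i and d_j^r < d_j. Then the augmented recruitment-induced subgraph is not identified by the observed data: there exist two compatible pairs (G¹_SU, Z¹_SU) and (G²_SU, Z²_SU) such that in G¹_SU the vertices i and j have a common unsampled neighbor while in G²_SU they have no common unsampled neighbor; in particular, no graph isomorphism from G¹_SU to G²_SU fixes every vertex of V_R. -/
open Finset

namespace RDS

/-- Edge sets of finite undirected simple graphs on the ambient vertex type `ℕ`. -/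
abbrev Edges := Finset (Sym2 ℕ)

instance (VR : Finset ℕ) : DecidablePred (fun e : Sym2 ℕ => ∀ v ∈ e, v ∈ VR) :=
  fun _ => decidable_of_iff _ Finset.mem_sym2_iff

instance (VR : Finset ℕ) : DecidablePred (fun e : Sym2 ℕ => ∃ v ∈ e, v ∈ VR) :=
  fun e => decidable_of_iff (∃ v ∈ VR, v ∈ e) (by tauto)

instance (VR : Finset ℕ) : DecidablePred (fun e : Sym2 ℕ => ∃ v ∈ e, v ∉ VR) :=
  fun e => decidable_of_iff (¬ ∀ v ∈ e, v ∈ VR) (by simp)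

/-- Degree of `i` in an edge set: number of edges containing `i`. -/
def degE (E : Edges) (i : ℕ) : ℕ := (E.filter (fun e => i ∈ e)).card

/-- Edge set of the undirected graph underlying the directed recruitment graph `E_R`. -/
def uRec (ER : Finset (ℕ × ℕ)) : Edges := ER.image (fun p => s(p.1, p.2))

/-- Degree of `i` in the undirected graph underlying the recruitment graph (`d_i^r`). -/
def dRec (ER : Finset (ℕ × ℕ)) (i : ℕ) : ℕ := degE (uRec ER) i

/-- Compatibility of an augmented recruitment-induced subgraph `(V_SU, E_SU, Z_SU)`
with the observed RDS data `(G_R, d_R, Z_R)`. -/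
structure Compat (VR : Finset ℕ) (ER : Finset (ℕ × ℕ)) (d : ℕ → ℕ) (ZR : ℕ → Bool)
    (VSU : Finset ℕ) (ESU : Edges) (Z : ℕ → Bool) : Prop where
  loopless : ∀ e ∈ ESU, ¬ e.IsDiag
  vr_subset : VR ⊆ VSU
  edges_subset : ∀ e ∈ ESU, ∀ v ∈ e, v ∈ VSU
  er_subset : ∀ p ∈ ER, s(p.1, p.2) ∈ ESU
  trait_agree : ∀ i ∈ VR, Z i = ZR i
  covered : ∀ u ∈ VSU, u ∉ VR → ∃ v ∈ VR, s(u, v) ∈ ESU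
  no_unsampled_edge : ∀ e ∈ ESU, ∃ v ∈ e, v ∈ VR
  degree_eq : ∀ i ∈ VR, degE ESU i = d i

/-! ### Auxiliary constructions for the proof -/

/-- Fresh (unsampled) vertex attached to recruited vertex `k`, index `t`. -/
def F (N k t : ℕ) : ℕ := N + 1 + Nat.pair k t

lemma F_gt (N k t : ℕ) : N < F N k t := by
  simp only [F]; omega

lemma F_inj {N k t k' t' : ℕ} (h : F N k t = F N k' t') : k = k' ∧ t = t' := by
  have h' : Nat.pair k t = Nat.pair k' t' := by
    simp only [F] at h; omega
  exact Nat.pair_eq_pair.mp h'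

/-- Pendant edges: attach `δ k` fresh vertices to each `k ∈ VR`. -/
def Pend (VR : Finset ℕ) (N : ℕ) (δ : ℕ → ℕ) : Edges :=
  VR.biUnion fun k => (Finset.range (δ k)).image fun t => s(k, F N k t)

/-- The fresh vertices used in `Pend`. -/
def FreshV (VR : Finset ℕ) (N : ℕ) (δ : ℕ → ℕ) : Finset ℕ :=
  VR.biUnion fun k => (Finset.range (δ k)).image (F N k)

lemma mem_Pend {VR : Finset ℕ} {N : ℕ} {δ : ℕ → ℕ} {e : Sym2 ℕ} :
    e ∈ Pend VR N δ ↔ ∃ k ∈ VR, ∃ t, t < δ k ∧ s(k, F N k t) = e := by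
  simp [Pend]

lemma mem_FreshV {VR : Finset ℕ} {N : ℕ} {δ : ℕ → ℕ} {u : ℕ} :
    u ∈ FreshV VR N δ ↔ ∃ k ∈ VR, ∃ t, t < δ k ∧ F N k t = u := by
  simp [FreshV]

lemma degE_union {A B : Edges} (h : Disjoint A B) (v : ℕ) :
    degE (A ∪ B) v = degE A v + degE B v := by
  rw [degE, Finset.filter_union, Finset.card_union_of_disjoint
    (h.mono (Finset.filter_subset _ _) (Finset.filter_subset _ _))]
  rfl

lemma degE_Pend {VR : Finset ℕ} {N : ℕ} {δ : ℕ → ℕ} (hN : ∀ k ∈ VR, k < N)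
    {v : ℕ} (hv : v ∈ VR) : degE (Pend VR N δ) v = δ v := by
  have hfilter : (Pend VR N δ).filter (fun e => v ∈ e) =
      (Finset.range (δ v)).image fun t => s(v, F N v t) := by
    ext e
    simp only [Finset.mem_filter, mem_Pend, Finset.mem_image, Finset.mem_range]
    constructor
    · rintro ⟨⟨k, hk, t, ht, rfl⟩, hve⟩
      rw [Sym2.mem_iff] at hve
      have hkN := hN k hk
      have hvN := hN v hv
      have hF := F_gt N k t
      rcases hve with rfl | rfl
      · exact ⟨t, ht, rfl⟩
      · omega
    · rintro ⟨t, ht, rfl⟩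
      exact ⟨⟨v, hv, t, ht, rfl⟩, by simp⟩
  have hinj : Function.Injective (fun t => s(v, F N v t)) := by
    intro a b hab
    exact (F_inj (Sym2.congr_right.mp hab)).2
  rw [degE, hfilter, Finset.card_image_of_injective _ hinj, Finset.card_range]

/-- If two distinct recruited vertices each have unused degree, then the
augmented recruitment-induced subgraph is not identified: there are two compatible pairs,
in one of which `i` and `j` have a common unsampled neighbor while in the other they do not;
in particular no graph isomorphism between them fixes every vertex of `V_R`. -/
theorem augmented_subgraph_not_identified
    (VR : Finset ℕ) (ER : Finset (ℕ × ℕ)) (d : ℕ → ℕ) (ZR : ℕ → Bool)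
    (hER : ∀ p ∈ ER, p.1 ∈ VR ∧ p.2 ∈ VR ∧ p.1 ≠ p.2)
    (hd : ∀ k ∈ VR, dRec ER k ≤ d k)
    (i j : ℕ) (hi : i ∈ VR) (hj : j ∈ VR) (hij : i ≠ j)
    (hdi : dRec ER i < d i) (hdj : dRec ER j < d j) :
    ∃ (VSU₁ : Finset ℕ) (ESU₁ : Edges) (Z₁ : ℕ → Bool)
      (VSU₂ : Finset ℕ) (ESU₂ : Edges) (Z₂ : ℕ → Bool),
      Compat VR ER d ZR VSU₁ ESU₁ Z₁ ∧
      Compat VR ER d ZR VSU₂ ESU₂ Z₂ ∧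
      -- in the first pair, `i` and `j` have a common unsampled neighbor
      (∃ u ∈ VSU₁, u ∉ VR ∧ s(i, u) ∈ ESU₁ ∧ s(j, u) ∈ ESU₁) ∧
      -- in the second pair they have none
      (¬ ∃ u ∈ VSU₂, u ∉ VR ∧ s(i, u) ∈ ESU₂ ∧ s(j, u) ∈ ESU₂) ∧
      -- in particular, no graph isomorphism from `G¹_SU` to `G²_SU` fixes every vertex of `V_R`
      ¬ ∃ φ : ℕ → ℕ, Set.BijOn φ ↑VSU₁ ↑VSU₂ ∧ (∀ v ∈ VR, φ v = v) ∧
          ∀ a ∈ VSU₁, ∀ b ∈ VSU₁, (s(a, b) ∈ ESU₁ ↔ s(φ a, φ b) ∈ ESU₂) := by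
  classical
  set N : ℕ := VR.sup id + 1 with hNdef
  have hN : ∀ k ∈ VR, k < N := fun k hk =>
    Nat.lt_succ_of_le (Finset.le_sup (f := id) hk)
  have hNnotVR : N ∉ VR := fun h => absurd (hN N h) (lt_irrefl N)
  have hiN : i ≠ N := Nat.ne_of_lt (hN i hi)
  have hjN : j ≠ N := Nat.ne_of_lt (hN j hj)
  set δ : ℕ → ℕ := fun k => d k - dRec ER k with hδdef
  set δ₁ : ℕ → ℕ := fun k => if k = i ∨ k = j then δ k - 1 else δ k with hδ₁def
  set B : Edges := uRec ER with hBdef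
  set X : Edges := ({s(i, N), s(j, N)} : Edges) with hXdef
  set P₁ : Edges := Pend VR N δ₁ with hP₁def
  set P₂ : Edges := Pend VR N δ with hP₂def
  set E₁ : Edges := (B ∪ X) ∪ P₁ with hE₁def
  set E₂ : Edges := B ∪ P₂ with hE₂def
  set W₁ : Finset ℕ := insert N (VR ∪ FreshV VR N δ₁) with hW₁def
  set W₂ : Finset ℕ := VR ∪ FreshV VR N δ with hW₂def
  -- basic facts about B
  have hBmem : ∀ e ∈ B, ∀ v ∈ e, v ∈ VR := by
    intro e he v hv
    obtain ⟨p, hp, rfl⟩ := Finset.mem_image.mp he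
    rw [Sym2.mem_iff] at hv
    rcases hER p hp with ⟨h1, h2, _⟩
    rcases hv with rfl | rfl <;> assumption
  -- disjointnesses
  have hdisjBP : ∀ δ' : ℕ → ℕ, Disjoint B (Pend VR N δ') := by
    intro δ'
    rw [Finset.disjoint_left]
    intro e heB heP
    rw [mem_Pend] at heP
    obtain ⟨k, hk, t, ht, rfl⟩ := heP
    have h1 := hBmem _ heB (F N k t) (by simp)
    have h2 := hN _ h1
    have h3 := F_gt N k t
    omega
  have hdisjBX : Disjoint B X := by
    rw [Finset.disjoint_left]
    intro e heB heX
    rcases Finset.mem_insert.mp heX with rfl | heX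
    · exact hNnotVR (hBmem _ heB N (by simp))
    · rw [Finset.mem_singleton] at heX
      subst heX
      exact hNnotVR (hBmem _ heB N (by simp))
  have hdisjXP : Disjoint X P₁ := by
    rw [Finset.disjoint_right]
    intro e heP heX
    rw [hP₁def, mem_Pend] at heP
    obtain ⟨k, hk, t, ht, rfl⟩ := heP
    have hkN := hN k hk
    have hF := F_gt N k t
    rcases Finset.mem_insert.mp heX with h | h
    · rw [Sym2.eq_iff] at h; omega
    · rw [Finset.mem_singleton, Sym2.eq_iff] at h; omega
  have hdisjBXP : Disjoint (B ∪ X) P₁ :=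
    Finset.disjoint_union_left.mpr ⟨hdisjBP δ₁, hdisjXP⟩
  -- degrees in X
  have hXi : degE X i = 1 := by
    have hfil : X.filter (fun e => i ∈ e) = {s(i, N)} := by
      ext e
      simp only [hXdef, Finset.mem_filter, Finset.mem_insert, Finset.mem_singleton]
      constructor
      · rintro ⟨rfl | rfl, h2⟩
        · rfl
        · rw [Sym2.mem_iff] at h2; omega
      · rintro rfl
        exact ⟨Or.inl rfl, by simp⟩
    simp [degE, hfil]
  have hXj : degE X j = 1 := by
    have hfil : X.filter (fun e => j ∈ e) = {s(j, N)} := by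
      ext e
      simp only [hXdef, Finset.mem_filter, Finset.mem_insert, Finset.mem_singleton]
      constructor
      · rintro ⟨rfl | rfl, h2⟩
        · rw [Sym2.mem_iff] at h2; omega
        · rfl
      · rintro rfl
        exact ⟨Or.inr rfl, by simp⟩
    simp [degE, hfil]
  have hXother : ∀ v ∈ VR, v ≠ i → v ≠ j → degE X v = 0 := by
    intro v hv hvi hvj
    have hvN : v ≠ N := Nat.ne_of_lt (hN v hv)
    have hfil : X.filter (fun e => v ∈ e) = ∅ := by
      ext e
      simp only [hXdef, Finset.mem_filter, Finset.mem_insert, Finset.mem_singleton,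
        Finset.notMem_empty, iff_false, not_and]
      rintro (rfl | rfl) <;> (rw [Sym2.mem_iff]; omega)
    simp [degE, hfil]
  -- δ facts
  have hδi : 1 ≤ δ i := by simp only [hδdef]; omega
  have hδj : 1 ≤ δ j := by simp only [hδdef]; omega
  -- Compat₁
  have compat₁ : Compat VR ER d ZR W₁ E₁ ZR := by
    constructor
    · -- loopless
      intro e he
      rcases Finset.mem_union.mp he with he | he
      · rcases Finset.mem_union.mp he with he | he
        · obtain ⟨p, hp, rfl⟩ := Finset.mem_image.mp he
          rw [Sym2.mk_isDiag_iff]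
          exact (hER p hp).2.2
        · rcases Finset.mem_insert.mp he with rfl | he
          · rw [Sym2.mk_isDiag_iff]; exact hiN
          · rw [Finset.mem_singleton] at he; subst he
            rw [Sym2.mk_isDiag_iff]; exact hjN
      · rw [hP₁def, mem_Pend] at he
        obtain ⟨k, hk, t, ht, rfl⟩ := he
        rw [Sym2.mk_isDiag_iff]
        have := hN k hk; have := F_gt N k t; omega
    · -- vr_subset
      intro v hv
      exact Finset.mem_insert_of_mem (Finset.mem_union_left _ hv)
    · -- edges_subset
      intro e he v hv
      rcases Finset.mem_union.mp he with he | he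
      · rcases Finset.mem_union.mp he with he | he
        · exact Finset.mem_insert_of_mem (Finset.mem_union_left _ (hBmem _ he v hv))
        · have hvmem : v = i ∨ v = j ∨ v = N := by
            rcases Finset.mem_insert.mp he with rfl | he
            · rw [Sym2.mem_iff] at hv; tauto
            · rw [Finset.mem_singleton] at he; subst he
              rw [Sym2.mem_iff] at hv; tauto
          rcases hvmem with rfl | rfl | rfl
          · exact Finset.mem_insert_of_mem (Finset.mem_union_left _ hi)
          · exact Finset.mem_insert_of_mem (Finset.mem_union_left _ hj)
          · exact Finset.mem_insert_self _ _
      · rw [hP₁def, mem_Pend] at he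
        obtain ⟨k, hk, t, ht, rfl⟩ := he
        rw [Sym2.mem_iff] at hv
        rcases hv with rfl | rfl
        · exact Finset.mem_insert_of_mem (Finset.mem_union_left _ hk)
        · exact Finset.mem_insert_of_mem (Finset.mem_union_right _
            (mem_FreshV.mpr ⟨k, hk, t, ht, rfl⟩))
    · -- er_subset
      intro p hp
      exact Finset.mem_union_left _ (Finset.mem_union_left _
        (Finset.mem_image.mpr ⟨p, hp, rfl⟩))
    · -- trait_agree
      intro _ _; rfl
    · -- covered
      intro u hu huVR
      rcases Finset.mem_insert.mp hu with rfl | hu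
      · refine ⟨i, hi, ?_⟩
        rw [Sym2.eq_swap]
        exact Finset.mem_union_left _ (Finset.mem_union_right _ (Finset.mem_insert_self _ _))
      · rcases Finset.mem_union.mp hu with hu | hu
        · exact absurd hu huVR
        · rw [mem_FreshV] at hu
          obtain ⟨k, hk, t, ht, rfl⟩ := hu
          refine ⟨k, hk, ?_⟩
          rw [Sym2.eq_swap]
          exact Finset.mem_union_right _ (mem_Pend.mpr ⟨k, hk, t, ht, rfl⟩)
    · -- no_unsampled_edge
      intro e he
      rcases Finset.mem_union.mp he with he | he
      · rcases Finset.mem_union.mp he with he | he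
        · obtain ⟨p, hp, rfl⟩ := Finset.mem_image.mp he
          obtain ⟨a, b⟩ := p
          exact ⟨a, by simp, (hER (a, b) hp).1⟩
        · rcases Finset.mem_insert.mp he with rfl | he
          · exact ⟨i, by simp, hi⟩
          · rw [Finset.mem_singleton] at he; subst he
            exact ⟨j, by simp, hj⟩
      · rw [hP₁def, mem_Pend] at he
        obtain ⟨k, hk, t, ht, rfl⟩ := he
        exact ⟨k, by simp, hk⟩
    · -- degree_eq
      intro v hv
      rw [hE₁def, degE_union hdisjBXP, degE_union hdisjBX, hP₁def, degE_Pend hN hv]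
      have hBv : degE B v = dRec ER v := rfl
      have hdv := hd v hv
      by_cases hvi : v = i
      · subst hvi
        have h1 : δ₁ v = d v - dRec ER v - 1 := by simp [hδ₁def, hδdef]
        rw [hXi, hBv, h1]
        omega
      · by_cases hvj : v = j
        · subst hvj
          have h1 : δ₁ v = d v - dRec ER v - 1 := by simp [hδ₁def, hδdef]
          rw [hXj, hBv, h1]
          omega
        · have h1 : δ₁ v = d v - dRec ER v := by simp [hδ₁def, hδdef, hvi, hvj]
          rw [hXother v hv hvi hvj, hBv, h1]
          omega
  -- Compat₂
  have compat₂ : Compat VR ER d ZR W₂ E₂ ZR := by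
    constructor
    · intro e he
      rcases Finset.mem_union.mp he with he | he
      · obtain ⟨p, hp, rfl⟩ := Finset.mem_image.mp he
        rw [Sym2.mk_isDiag_iff]
        exact (hER p hp).2.2
      · rw [hP₂def, mem_Pend] at he
        obtain ⟨k, hk, t, ht, rfl⟩ := he
        rw [Sym2.mk_isDiag_iff]
        have := hN k hk; have := F_gt N k t; omega
    · intro v hv
      exact Finset.mem_union_left _ hv
    · intro e he v hv
      rcases Finset.mem_union.mp he with he | he
      · exact Finset.mem_union_left _ (hBmem _ he v hv)
      · rw [hP₂def, mem_Pend] at he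
        obtain ⟨k, hk, t, ht, rfl⟩ := he
        rw [Sym2.mem_iff] at hv
        rcases hv with rfl | rfl
        · exact Finset.mem_union_left _ hk
        · exact Finset.mem_union_right _ (mem_FreshV.mpr ⟨k, hk, t, ht, rfl⟩)
    · intro p hp
      exact Finset.mem_union_left _ (Finset.mem_image.mpr ⟨p, hp, rfl⟩)
    · intro _ _; rfl
    · intro u hu huVR
      rcases Finset.mem_union.mp hu with hu | hu
      · exact absurd hu huVR
      · rw [mem_FreshV] at hu
        obtain ⟨k, hk, t, ht, rfl⟩ := hu
        refine ⟨k, hk, ?_⟩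
        rw [Sym2.eq_swap]
        exact Finset.mem_union_right _ (mem_Pend.mpr ⟨k, hk, t, ht, rfl⟩)
    · intro e he
      rcases Finset.mem_union.mp he with he | he
      · obtain ⟨p, hp, rfl⟩ := Finset.mem_image.mp he
        obtain ⟨a, b⟩ := p
        exact ⟨a, by simp, (hER (a, b) hp).1⟩
      · rw [hP₂def, mem_Pend] at he
        obtain ⟨k, hk, t, ht, rfl⟩ := he
        exact ⟨k, by simp, hk⟩
    · intro v hv
      rw [hE₂def, degE_union (hdisjBP δ), degE_Pend hN hv]
      have hBv : degE B v = dRec ER v := rfl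
      have hδv : δ v = d v - dRec ER v := rfl
      have hdv := hd v hv
      rw [hBv, hδv]
      omega
  -- common neighbor in construction 1
  have hcommon : ∃ u ∈ W₁, u ∉ VR ∧ s(i, u) ∈ E₁ ∧ s(j, u) ∈ E₁ := by
    refine ⟨N, Finset.mem_insert_self _ _, hNnotVR, ?_, ?_⟩
    · exact Finset.mem_union_left _ (Finset.mem_union_right _ (Finset.mem_insert_self _ _))
    · exact Finset.mem_union_left _ (Finset.mem_union_right _
        (Finset.mem_insert_of_mem (Finset.mem_singleton_self _)))
  -- no common neighbor in construction 2
  have hno : ¬ ∃ u ∈ W₂, u ∉ VR ∧ s(i, u) ∈ E₂ ∧ s(j, u) ∈ E₂ := by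
    rintro ⟨u, hu, huVR, hiu, hju⟩
    have hgetk : ∀ v ∈ VR, s(v, u) ∈ E₂ → ∃ t, u = F N v t := by
      intro v hv hvu
      rcases Finset.mem_union.mp hvu with h | h
      · exact absurd (hBmem _ h u (by simp)) huVR
      · rw [hP₂def, mem_Pend] at h
        obtain ⟨k, hk, t, ht, he⟩ := h
        rw [Sym2.eq_iff] at he
        rcases he with ⟨rfl, h2⟩ | ⟨rfl, h2⟩
        · exact ⟨t, h2.symm⟩
        · exact absurd hk huVR
    obtain ⟨t, rfl⟩ := hgetk i hi hiu
    obtain ⟨t', ht'⟩ := hgetk j hj hju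
    exact hij (F_inj ht'.symm).1.symm
  refine ⟨W₁, E₁, ZR, W₂, E₂, ZR, compat₁, compat₂, hcommon, hno, ?_⟩
  rintro ⟨φ, hbij, hfix, hiso⟩
  have hNW₁ : N ∈ W₁ := Finset.mem_insert_self _ _
  have hiW₁ : i ∈ W₁ := compat₁.vr_subset hi
  have hjW₁ : j ∈ W₁ := compat₁.vr_subset hj
  have hφN_W₂ : φ N ∈ W₂ := by
    have := hbij.mapsTo (by exact_mod_cast hNW₁ : (N : ℕ) ∈ (↑W₁ : Set ℕ))
    exact_mod_cast this
  have hφN_notVR : φ N ∉ VR := by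
    intro h
    have hfixφN : φ (φ N) = φ N := hfix (φ N) h
    have hmem : (φ N : ℕ) ∈ (↑W₁ : Set ℕ) := by
      exact_mod_cast compat₁.vr_subset h
    have heq : φ N = N := hbij.injOn hmem (by exact_mod_cast hNW₁) hfixφN
    rw [heq] at h
    exact hNnotVR h
  apply hno
  refine ⟨φ N, hφN_W₂, hφN_notVR, ?_, ?_⟩
  · have h := (hiso i hiW₁ N hNW₁).mp
      (Finset.mem_union_left _ (Finset.mem_union_right _ (Finset.mem_insert_self _ _)))
    rwa [hfix i hi] at h
  · have h := (hiso j hjW₁ N hNW₁).mp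
      (Finset.mem_union_left _ (Finset.mem_union_right _
        (Finset.mem_insert_of_mem (Finset.mem_singleton_self _))))
    rwa [hfix j hj] at h

end RDS
end

section
/- Suppose d_k ≥ d_k^r for every k ∈ V_R and there exist distinct vertices i, j ∈ V_R with d_i > d_i^r, d_j > d_j^r, and Z_i ≠ Z_j. Then the subgraph homophily is not point identified: there exist two compatible pairs (G¹_SU, Z¹_SU) and (G²_SU, Z²_SU), each having σ(A) > 0 and σ(Z) > 0 (so that h is defined for both), such that h(G¹_SU, Z¹_SU) ≠ h(G²_SU, Z²_SU). -/
open Finset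

namespace RDS

/-- The set `P` of unordered pairs `{i,j}` with `i ∈ V_R`, `j ∈ V_SU`, `i ≠ j`. -/
def pairsP (VR VSU : Finset ℕ) : Edges :=
  ((VR ×ˢ VSU).filter (fun p => p.1 ≠ p.2)).image (fun p => s(p.1, p.2))

/-- Indicator `1{Z_i = Z_j}` of trait agreement on an unordered pair, as a real number. -/
def zInd (Z : ℕ → Bool) (e : Sym2 ℕ) : ℝ :=
  Sym2.lift ⟨fun i j => if Z i = Z j then 1 else 0, fun i j => by simp [eq_comm]⟩ e

/-- Adjacency indicator `A_{ij}` of an unordered pair. -/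
def aInd (E : Edges) (e : Sym2 ℕ) : ℝ := if e ∈ E then 1 else 0

/-- `Ā = |E_SU| / N_P`. -/
noncomputable def AbarC (VR VSU : Finset ℕ) (ESU : Edges) : ℝ :=
  (ESU.card : ℝ) / ((pairsP VR VSU).card : ℝ)

/-- `Z̄`, the mean of `1{Z_i = Z_j}` over `P`. -/
noncomputable def ZbarC (VR VSU : Finset ℕ) (Z : ℕ → Bool) : ℝ :=
  (∑ e ∈ pairsP VR VSU, zInd Z e) / ((pairsP VR VSU).card : ℝ)

/-- `σ(A)`. -/
noncomputable def sigmaAC (VR VSU : Finset ℕ) (ESU : Edges) : ℝ :=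
  Real.sqrt ((∑ e ∈ pairsP VR VSU, (aInd ESU e - AbarC VR VSU ESU) ^ 2) /
    ((pairsP VR VSU).card : ℝ))

/-- `σ(Z)`. -/
noncomputable def sigmaZC (VR VSU : Finset ℕ) (Z : ℕ → Bool) : ℝ :=
  Real.sqrt ((∑ e ∈ pairsP VR VSU, (zInd Z e - ZbarC VR VSU Z) ^ 2) /
    ((pairsP VR VSU).card : ℝ))

/-- Subgraph homophily `h(G_SU, Z_SU)` of a compatible pair. -/
noncomputable def homophilyC (VR VSU : Finset ℕ) (ESU : Edges) (Z : ℕ → Bool) : ℝ :=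
  (∑ e ∈ pairsP VR VSU, (aInd ESU e - AbarC VR VSU ESU) * (zInd Z e - ZbarC VR VSU Z)) /
    (((pairsP VR VSU).card : ℝ) * sigmaAC VR VSU ESU * sigmaZC VR VSU Z)

section Construction
variable (VR : Finset ℕ) (ER : Finset (ℕ × ℕ)) (d : ℕ → ℕ)

/-- First fresh label. -/
def N0 : ℕ := VR.sup id + 1

/-- Spare degree of `k`. -/
def sp (k : ℕ) : ℕ := d k - dRec ER k

/-- Label of the `t`-th pendant of `k`. -/
def lab (k t : ℕ) : ℕ := N0 VR + Nat.pair k t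

/-- Set of unsampled pendant vertices. -/
def Uset : Finset ℕ := VR.biUnion (fun k => (Finset.range (sp ER d k)).image (lab VR k))

/-- Base anchor of a pendant label. -/
def anch1 (u : ℕ) : ℕ := (Nat.unpair (u - N0 VR)).1

lemma lab_not_mem (k t : ℕ) : lab VR k t ∉ VR := by
  intro h
  have h1 : lab VR k t ≤ VR.sup id := Finset.le_sup (f := id) h
  have h2 : VR.sup id + 1 ≤ lab VR k t := Nat.le_add_right _ _
  omega

lemma anch1_lab (k t : ℕ) : anch1 VR (lab VR k t) = k := by
  simp [anch1, lab]

lemma lab_inj {k t k' t' : ℕ} (h : lab VR k t = lab VR k' t') : k = k' ∧ t = t' := by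
  have : Nat.pair k t = Nat.pair k' t' := by
    have := h; unfold lab at this; omega
  have := Nat.pair_eq_pair.mp this
  exact ⟨this.1, this.2⟩

lemma mem_Uset {u : ℕ} :
    u ∈ Uset VR ER d ↔ ∃ k ∈ VR, ∃ t < sp ER d k, u = lab VR k t := by
  simp [Uset, eq_comm]

lemma Uset_not_mem_VR {u : ℕ} (hu : u ∈ Uset VR ER d) : u ∉ VR := by
  obtain ⟨k, _, t, _, rfl⟩ := (mem_Uset VR ER d).mp hu
  exact lab_not_mem VR k t

lemma anch1_mem {u : ℕ} (hu : u ∈ Uset VR ER d) : anch1 VR u ∈ VR := by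
  obtain ⟨k, hk, t, _, rfl⟩ := (mem_Uset VR ER d).mp hu
  rw [anch1_lab]; exact hk

end Construction
section Construction2
variable (VR : Finset ℕ) (ER : Finset (ℕ × ℕ)) (d : ℕ → ℕ)

/-- Pendant edges for an anchor assignment. -/
def pendE (anch : ℕ → ℕ) : Edges := (Uset VR ER d).image (fun u => s(u, anch u))

variable {VR ER d}

lemma pend_injOn {anch : ℕ → ℕ} (ha : ∀ u ∈ Uset VR ER d, anch u ∈ VR) :
    Set.InjOn (fun u => s(u, anch u)) (Uset VR ER d) := by
  intro u hu v hv h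
  simp only [Sym2.eq, Sym2.rel_iff', Prod.mk.injEq, Prod.swap_prod_mk] at h
  rcases h with ⟨h1, _⟩ | ⟨h1, h2⟩
  · exact h1
  · exact absurd (h1.symm ▸ ha v hv) (Uset_not_mem_VR VR ER d hu)

lemma mem_pendE {anch : ℕ → ℕ} {e : Sym2 ℕ} :
    e ∈ pendE VR ER d anch ↔ ∃ u ∈ Uset VR ER d, e = s(u, anch u) := by
  simp [pendE, eq_comm]

lemma pendE_disj_uRec {anch : ℕ → ℕ}
    (hER : ∀ p ∈ ER, p.1 ∈ VR ∧ p.2 ∈ VR ∧ p.1 ≠ p.2) :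
    Disjoint (uRec ER) (pendE VR ER d anch) := by
  rw [Finset.disjoint_left]
  intro e he hpe
  obtain ⟨u, hu, rfl⟩ := mem_pendE.mp hpe
  obtain ⟨p, hp, hpe⟩ := Finset.mem_image.mp he
  have h1 := hER p hp
  have : u ∈ s(p.1, p.2) := hpe ▸ Sym2.mem_mk_left u (anch u)
  rw [Sym2.mem_iff] at this
  rcases this with rfl | rfl
  · exact Uset_not_mem_VR VR ER d hu h1.1
  · exact Uset_not_mem_VR VR ER d hu h1.2.1

lemma degE_union_disj {A B : Edges} (h : Disjoint A B) (k : ℕ) :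
    degE (A ∪ B) k = degE A k + degE B k := by
  unfold degE
  rw [Finset.filter_union, Finset.card_union_of_disjoint]
  exact Finset.disjoint_filter_filter h

lemma degE_pendE {anch : ℕ → ℕ} (ha : ∀ u ∈ Uset VR ER d, anch u ∈ VR)
    {k : ℕ} (hk : k ∈ VR) :
    degE (pendE VR ER d anch) k = ((Uset VR ER d).filter (fun u => anch u = k)).card := by
  unfold degE pendE
  rw [Finset.filter_image, Finset.card_image_of_injOn
    (Set.InjOn.mono (Finset.filter_subset _ _) (pend_injOn ha))]
  congr 1
  apply Finset.filter_congr
  intro u hu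
  simp only [Sym2.mem_iff]
  constructor
  · rintro (rfl | h)
    · exact absurd hk (Uset_not_mem_VR VR ER d hu)
    · exact h.symm
  · rintro rfl; simp

end Construction2
section Construction3
variable (VR : Finset ℕ) (ER : Finset (ℕ × ℕ)) (d : ℕ → ℕ) (i j : ℕ)

/-- Swapped anchor assignment. -/
def anch2 (u : ℕ) : ℕ :=
  if u = lab VR i 0 then j else if u = lab VR j 0 then i else anch1 VR u

variable {VR ER d i j}

lemma filter_anch1 {k : ℕ} (hk : k ∈ VR) :
    (Uset VR ER d).filter (fun u => anch1 VR u = k)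
      = (Finset.range (sp ER d k)).image (lab VR k) := by
  ext u
  simp only [Finset.mem_filter, Finset.mem_image, Finset.mem_range]
  constructor
  · rintro ⟨hu, ha⟩
    obtain ⟨k', hk', t, ht, rfl⟩ := (mem_Uset VR ER d).mp hu
    rw [anch1_lab] at ha
    exact ⟨t, ha ▸ ht, by rw [ha]⟩
  · rintro ⟨t, ht, rfl⟩
    exact ⟨(mem_Uset VR ER d).mpr ⟨k, hk, t, ht, rfl⟩, anch1_lab VR k t⟩

lemma card_filter_anch1 {k : ℕ} (hk : k ∈ VR) :
    ((Uset VR ER d).filter (fun u => anch1 VR u = k)).card = sp ER d k := by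
  rw [filter_anch1 hk, Finset.card_image_of_injOn, Finset.card_range]
  intro a _ b _ h
  exact (lab_inj VR h).2

lemma ui_mem (hi : i ∈ VR) (hspi : 1 ≤ sp ER d i) : lab VR i 0 ∈ Uset VR ER d :=
  (mem_Uset VR ER d).mpr ⟨i, hi, 0, hspi, rfl⟩

lemma ui_ne_uj (hij : i ≠ j) : lab VR i 0 ≠ lab VR j 0 :=
  fun h => hij (lab_inj VR h).1

lemma anch2_eq_anch1_swap (_hij : i ≠ j) (u : ℕ) :
    anch2 VR i j u = anch1 VR (Equiv.swap (lab VR i 0) (lab VR j 0) u) := by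
  unfold anch2
  by_cases h1 : u = lab VR i 0
  · subst h1
    rw [if_pos rfl, Equiv.swap_apply_left, anch1_lab]
  · rw [if_neg h1]
    by_cases h2 : u = lab VR j 0
    · subst h2
      rw [if_pos rfl, Equiv.swap_apply_right, anch1_lab]
    · rw [if_neg h2, Equiv.swap_apply_of_ne_of_ne h1 h2]

lemma swap_mem_Uset (hi : i ∈ VR) (hj : j ∈ VR)
    (hspi : 1 ≤ sp ER d i) (hspj : 1 ≤ sp ER d j) {u : ℕ} (hu : u ∈ Uset VR ER d) :
    Equiv.swap (lab VR i 0) (lab VR j 0) u ∈ Uset VR ER d := by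
  by_cases h1 : u = lab VR i 0
  · subst h1; rw [Equiv.swap_apply_left]; exact ui_mem hj hspj
  · by_cases h2 : u = lab VR j 0
    · subst h2; rw [Equiv.swap_apply_right]; exact ui_mem hi hspi
    · rwa [Equiv.swap_apply_of_ne_of_ne h1 h2]

lemma card_filter_anch2 (hi : i ∈ VR) (hj : j ∈ VR) (hij : i ≠ j)
    (hspi : 1 ≤ sp ER d i) (hspj : 1 ≤ sp ER d j) {k : ℕ} (hk : k ∈ VR) :
    ((Uset VR ER d).filter (fun u => anch2 VR i j u = k)).card = sp ER d k := by
  rw [← card_filter_anch1 (ER := ER) (d := d) hk]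
  apply Finset.card_bij' (fun u _ => Equiv.swap (lab VR i 0) (lab VR j 0) u)
    (fun u _ => Equiv.swap (lab VR i 0) (lab VR j 0) u)
  · intro u hu
    rw [Finset.mem_filter] at hu ⊢
    exact ⟨swap_mem_Uset hi hj hspi hspj hu.1,
      by rw [← anch2_eq_anch1_swap hij]; exact hu.2⟩
  · intro u hu
    rw [Finset.mem_filter] at hu ⊢
    refine ⟨swap_mem_Uset hi hj hspi hspj hu.1, ?_⟩
    rw [anch2_eq_anch1_swap hij, Equiv.swap_apply_self]
    exact hu.2
  · intro u _; exact Equiv.swap_apply_self _ _ u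
  · intro u _; exact Equiv.swap_apply_self _ _ u

lemma anch2_mem (hi : i ∈ VR) (hj : j ∈ VR) {u : ℕ} (hu : u ∈ Uset VR ER d) :
    anch2 VR i j u ∈ VR := by
  unfold anch2
  split
  · exact hj
  · split
    · exact hi
    · exact anch1_mem VR ER d hu

end Construction3
section Construction4
variable (VR : Finset ℕ) (ER : Finset (ℕ × ℕ)) (d : ℕ → ℕ) (ZR : ℕ → Bool)

/-- Extension of the trait to pendant vertices: copy the base anchor's trait. -/
def Zext (v : ℕ) : Bool := if v ∈ VR then ZR v else ZR (anch1 VR v)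

variable {VR ER d ZR}

lemma compat_of_anchor
    (hER : ∀ p ∈ ER, p.1 ∈ VR ∧ p.2 ∈ VR ∧ p.1 ≠ p.2)
    (hd : ∀ k ∈ VR, dRec ER k ≤ d k)
    (anch : ℕ → ℕ) (ha : ∀ u ∈ Uset VR ER d, anch u ∈ VR)
    (hcount : ∀ k ∈ VR, ((Uset VR ER d).filter (fun u => anch u = k)).card = sp ER d k) :
    Compat VR ER d ZR (VR ∪ Uset VR ER d) (uRec ER ∪ pendE VR ER d anch) (Zext VR ZR) := by
  constructor
  · -- loopless
    intro e he
    rcases Finset.mem_union.mp he with he | he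
    · obtain ⟨p, hp, rfl⟩ := Finset.mem_image.mp he
      rw [Sym2.isDiag_iff_proj_eq]
      exact (hER p hp).2.2
    · obtain ⟨u, hu, rfl⟩ := mem_pendE.mp he
      rw [Sym2.isDiag_iff_proj_eq]
      intro h
      exact Uset_not_mem_VR VR ER d hu (h ▸ ha u hu)
  · exact Finset.subset_union_left
  · -- edges_subset
    intro e he v hv
    rcases Finset.mem_union.mp he with he | he
    · obtain ⟨p, hp, rfl⟩ := Finset.mem_image.mp he
      rw [Sym2.mem_iff] at hv
      rcases hv with rfl | rfl
      · exact Finset.mem_union_left _ (hER p hp).1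
      · exact Finset.mem_union_left _ (hER p hp).2.1
    · obtain ⟨u, hu, rfl⟩ := mem_pendE.mp he
      rw [Sym2.mem_iff] at hv
      rcases hv with rfl | rfl
      · exact Finset.mem_union_right _ hu
      · exact Finset.mem_union_left _ (ha u hu)
  · -- er_subset
    intro p hp
    exact Finset.mem_union_left _ (Finset.mem_image_of_mem _ hp)
  · -- trait_agree
    intro k hk
    simp [Zext, hk]
  · -- covered
    intro u hu hnu
    rcases Finset.mem_union.mp hu with hu | hu
    · exact absurd hu hnu
    · exact ⟨anch u, ha u hu, Finset.mem_union_right _ (Finset.mem_image_of_mem _ hu)⟩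
  · -- no_unsampled_edge
    intro e he
    rcases Finset.mem_union.mp he with he | he
    · obtain ⟨p, hp, rfl⟩ := Finset.mem_image.mp he
      exact ⟨p.1, Sym2.mem_mk_left _ _, (hER p hp).1⟩
    · obtain ⟨u, hu, rfl⟩ := mem_pendE.mp he
      exact ⟨anch u, Sym2.mem_mk_right _ _, ha u hu⟩
  · -- degree_eq
    intro k hk
    rw [degE_union_disj (pendE_disj_uRec hER), degE_pendE ha hk, hcount k hk]
    have := hd k hk
    unfold sp
    have hdr : degE (uRec ER) k = dRec ER k := rfl
    omega

end Construction4
section Sums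

lemma mem_pairsP {A B : Finset ℕ} {e : Sym2 ℕ} :
    e ∈ pairsP A B ↔ ∃ a ∈ A, ∃ b ∈ B, a ≠ b ∧ e = s(a, b) := by
  simp only [pairsP, Finset.mem_image, Finset.mem_filter, Finset.mem_product]
  constructor
  · rintro ⟨⟨a, b⟩, ⟨⟨ha, hb⟩, hne⟩, rfl⟩
    exact ⟨a, ha, b, hb, hne, rfl⟩
  · rintro ⟨a, ha, b, hb, hne, rfl⟩
    exact ⟨(a, b), ⟨⟨ha, hb⟩, hne⟩, rfl⟩

lemma sum_aInd {P E : Edges} (h : E ⊆ P) : ∑ e ∈ P, aInd E e = (E.card : ℝ) := by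
  unfold aInd
  rw [Finset.sum_boole, Finset.filter_mem_eq_inter, Finset.inter_eq_right.mpr h]

lemma sum_aInd_mul {P E : Edges} (h : E ⊆ P) (f : Sym2 ℕ → ℝ) :
    ∑ e ∈ P, aInd E e * f e = ∑ e ∈ E, f e := by
  have : ∀ e ∈ P, aInd E e * f e = if e ∈ E then f e else 0 := by
    intro e _; unfold aInd; split <;> simp
  rw [Finset.sum_congr rfl this, ← Finset.sum_filter,
    Finset.filter_mem_eq_inter, Finset.inter_eq_right.mpr h]

lemma sum_sq_indicator {P E : Edges} (h : E ⊆ P) (c : ℝ) :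
    ∑ e ∈ P, (aInd E e - c) ^ 2
      = (E.card : ℝ) - 2 * c * E.card + P.card * c ^ 2 := by
  have step : ∀ e ∈ P, (aInd E e - c) ^ 2 = aInd E e - 2 * c * aInd E e + c ^ 2 := by
    intro e _; unfold aInd; split <;> ring
  rw [Finset.sum_congr rfl step, Finset.sum_add_distrib, Finset.sum_sub_distrib,
    ← Finset.mul_sum, Finset.sum_const, nsmul_eq_mul, sum_aInd h]

lemma sum_numerator {P E : Edges} (h : E ⊆ P) (f : Sym2 ℕ → ℝ) (c z : ℝ) :
    ∑ e ∈ P, (aInd E e - c) * (f e - z)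
      = (∑ e ∈ E, f e) - c * (∑ e ∈ P, f e) - z * E.card + P.card * (c * z) := by
  have step : ∀ e ∈ P, (aInd E e - c) * (f e - z)
      = aInd E e * f e - c * f e - z * aInd E e + c * z := by
    intro e _; ring
  rw [Finset.sum_congr rfl step, Finset.sum_add_distrib, Finset.sum_sub_distrib,
    Finset.sum_sub_distrib, ← Finset.mul_sum, ← Finset.mul_sum, Finset.sum_const,
    nsmul_eq_mul, sum_aInd h, sum_aInd_mul h]

lemma sum_sq_pos {P : Edges} {g : Sym2 ℕ → ℝ} {c : ℝ} {e1 e2 : Sym2 ℕ}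
    (h1 : e1 ∈ P) (h2 : e2 ∈ P) (hne : g e1 ≠ g e2) :
    0 < ∑ e ∈ P, (g e - c) ^ 2 := by
  have hnn : ∀ e ∈ P, (0:ℝ) ≤ (g e - c) ^ 2 := fun e _ => sq_nonneg _
  rcases (Finset.sum_nonneg hnn).lt_or_eq with hlt | heq
  · exact hlt
  · exfalso
    have hz := (Finset.sum_eq_zero_iff_of_nonneg hnn).mp heq.symm
    have z1 := hz e1 h1
    have z2 := hz e2 h2
    rw [pow_eq_zero_iff (by norm_num), sub_eq_zero] at z1 z2
    exact hne (z1.trans z2.symm)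

lemma zInd_mk (Z : ℕ → Bool) (a b : ℕ) :
    zInd Z s(a, b) = if Z a = Z b then 1 else 0 := rfl

end Sums
section Construction5
variable {VR : Finset ℕ} {ER : Finset (ℕ × ℕ)} {d : ℕ → ℕ}

lemma edges_sub_pairs (hER : ∀ p ∈ ER, p.1 ∈ VR ∧ p.2 ∈ VR ∧ p.1 ≠ p.2)
    {anch : ℕ → ℕ} (ha : ∀ u ∈ Uset VR ER d, anch u ∈ VR) :
    uRec ER ∪ pendE VR ER d anch ⊆ pairsP VR (VR ∪ Uset VR ER d) := by
  intro e he
  rcases Finset.mem_union.mp he with he | he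
  · obtain ⟨p, hp, rfl⟩ := Finset.mem_image.mp he
    obtain ⟨h1, h2, h3⟩ := hER p hp
    exact mem_pairsP.mpr ⟨p.1, h1, p.2, Finset.mem_union_left _ h2, h3, rfl⟩
  · obtain ⟨u, hu, rfl⟩ := mem_pendE.mp he
    refine mem_pairsP.mpr ⟨anch u, ha u hu, u, Finset.mem_union_right _ hu,
      fun h => Uset_not_mem_VR VR ER d hu (h ▸ ha u hu), Sym2.eq_swap⟩

lemma pair_mem_pairs {a b : ℕ} (haa : a ∈ VR) (hb : b ∈ VR ∪ Uset VR ER d) (hne : a ≠ b) :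
    s(a, b) ∈ pairsP VR (VR ∪ Uset VR ER d) :=
  mem_pairsP.mpr ⟨a, haa, b, hb, hne, rfl⟩

lemma card_constructed (hER : ∀ p ∈ ER, p.1 ∈ VR ∧ p.2 ∈ VR ∧ p.1 ≠ p.2)
    {anch : ℕ → ℕ} (ha : ∀ u ∈ Uset VR ER d, anch u ∈ VR) :
    (uRec ER ∪ pendE VR ER d anch).card = (uRec ER).card + (Uset VR ER d).card := by
  rw [Finset.card_union_of_disjoint (pendE_disj_uRec hER), pendE,
    Finset.card_image_of_injOn (pend_injOn ha)]

lemma sum_constructed (hER : ∀ p ∈ ER, p.1 ∈ VR ∧ p.2 ∈ VR ∧ p.1 ≠ p.2)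
    {anch : ℕ → ℕ} (ha : ∀ u ∈ Uset VR ER d, anch u ∈ VR) (f : Sym2 ℕ → ℝ) :
    ∑ e ∈ uRec ER ∪ pendE VR ER d anch, f e
      = (∑ e ∈ uRec ER, f e) + ∑ u ∈ Uset VR ER d, f s(u, anch u) := by
  rw [Finset.sum_union (pendE_disj_uRec hER), pendE,
    Finset.sum_image (fun x hx y hy h => pend_injOn ha hx hy h)]

lemma not_mem_uRec (hER : ∀ p ∈ ER, p.1 ∈ VR ∧ p.2 ∈ VR ∧ p.1 ≠ p.2)
    {x u : ℕ} (hu : u ∉ VR) : s(x, u) ∉ uRec ER := by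
  intro h
  obtain ⟨p, hp, hpe⟩ := Finset.mem_image.mp h
  have : u ∈ s(p.1, p.2) := hpe ▸ Sym2.mem_mk_right x u
  rw [Sym2.mem_iff] at this
  rcases this with rfl | rfl
  · exact hu (hER p hp).1
  · exact hu (hER p hp).2.1

lemma mem_E1_iff {x u : ℕ} (hER : ∀ p ∈ ER, p.1 ∈ VR ∧ p.2 ∈ VR ∧ p.1 ≠ p.2)
    {anch : ℕ → ℕ} (ha : ∀ u ∈ Uset VR ER d, anch u ∈ VR)
    (hx : x ∈ VR) (hu : u ∈ Uset VR ER d) :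
    s(x, u) ∈ uRec ER ∪ pendE VR ER d anch ↔ anch u = x := by
  have hunv := Uset_not_mem_VR VR ER d hu
  constructor
  · intro h
    rcases Finset.mem_union.mp h with h | h
    · exact absurd h (not_mem_uRec hER hunv)
    · obtain ⟨v, hv, hev⟩ := mem_pendE.mp h
      rw [Sym2.eq, Sym2.rel_iff', Prod.mk.injEq, Prod.mk.injEq] at hev
      rcases hev with ⟨rfl, h2⟩ | ⟨h1, h2⟩
      · exact absurd (h2 ▸ ha x hv) hunv
      · simp only [Prod.fst_swap, Prod.snd_swap] at h1 h2
        subst h2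
        exact h1.symm
  · rintro rfl
    exact Finset.mem_union_right _ (Sym2.eq_swap ▸ mem_pendE.mpr ⟨u, hu, rfl⟩)

end Construction5
/-- If distinct `i, j ∈ V_R` have unused degree and different traits, then
the subgraph homophily is not point identified: there are two compatible pairs, each with
`σ(A) > 0` and `σ(Z) > 0`, whose homophily values differ. -/
theorem homophily_not_point_identified
    (VR : Finset ℕ) (ER : Finset (ℕ × ℕ)) (d : ℕ → ℕ) (ZR : ℕ → Bool)
    (hER : ∀ p ∈ ER, p.1 ∈ VR ∧ p.2 ∈ VR ∧ p.1 ≠ p.2)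
    (hd : ∀ k ∈ VR, dRec ER k ≤ d k)
    (i j : ℕ) (hi : i ∈ VR) (hj : j ∈ VR) (hij : i ≠ j)
    (hdi : dRec ER i < d i) (hdj : dRec ER j < d j)
    (hZ : ZR i ≠ ZR j) :
    ∃ (VSU₁ : Finset ℕ) (ESU₁ : Edges) (Z₁ : ℕ → Bool)
      (VSU₂ : Finset ℕ) (ESU₂ : Edges) (Z₂ : ℕ → Bool),
      Compat VR ER d ZR VSU₁ ESU₁ Z₁ ∧
      Compat VR ER d ZR VSU₂ ESU₂ Z₂ ∧
      0 < sigmaAC VR VSU₁ ESU₁ ∧ 0 < sigmaZC VR VSU₁ Z₁ ∧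
      0 < sigmaAC VR VSU₂ ESU₂ ∧ 0 < sigmaZC VR VSU₂ Z₂ ∧
      homophilyC VR VSU₁ ESU₁ Z₁ ≠ homophilyC VR VSU₂ ESU₂ Z₂ := by
  classical
  have hspi : 1 ≤ sp ER d i := by unfold sp; omega
  have hspj : 1 ≤ sp ER d j := by unfold sp; omega
  set ui := lab VR i 0 with hui_def
  set uj := lab VR j 0 with huj_def
  have hui : ui ∈ Uset VR ER d := ui_mem hi hspi
  have huj : uj ∈ Uset VR ER d := ui_mem hj hspj
  have huiv : ui ∉ VR := lab_not_mem VR i 0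
  have hujv : uj ∉ VR := lab_not_mem VR j 0
  have ha1 : ∀ u ∈ Uset VR ER d, anch1 VR u ∈ VR := fun u hu => anch1_mem VR ER d hu
  have ha2 : ∀ u ∈ Uset VR ER d, anch2 VR i j u ∈ VR := fun u hu => anch2_mem hi hj hu
  set VSU := VR ∪ Uset VR ER d with hVSU
  set E1 := uRec ER ∪ pendE VR ER d (anch1 VR) with hE1
  set E2 := uRec ER ∪ pendE VR ER d (anch2 VR i j) with hE2
  set Z := Zext VR ZR with hZdef
  set P := pairsP VR VSU with hP
  have hsub1 : E1 ⊆ P := edges_sub_pairs hER ha1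
  have hsub2 : E2 ⊆ P := edges_sub_pairs hER ha2
  have hcard : E1.card = E2.card := by
    rw [hE1, hE2, card_constructed hER ha1, card_constructed hER ha2]
  -- trait values
  have hZi : Z i = ZR i := by rw [hZdef]; simp [Zext, hi]
  have hZj : Z j = ZR j := by rw [hZdef]; simp [Zext, hj]
  have hZui : Z ui = ZR i := by
    rw [hZdef]; simp only [Zext, if_neg huiv, hui_def, anch1_lab, lab_not_mem, ↓reduceIte]
  have hZuj : Z uj = ZR j := by
    rw [hZdef]; simp only [Zext, if_neg hujv, huj_def, anch1_lab, lab_not_mem, ↓reduceIte]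
  -- special pairs
  have hPij : s(i, j) ∈ P := pair_mem_pairs hi (Finset.mem_union_left _ hj) hij
  have hPiui : s(i, ui) ∈ P :=
    pair_mem_pairs hi (Finset.mem_union_right _ hui) (fun h => huiv (h ▸ hi))
  have hPjui : s(j, ui) ∈ P :=
    pair_mem_pairs hj (Finset.mem_union_right _ hui) (fun h => huiv (h ▸ hj))
  have hNpos : (0:ℝ) < P.card := by
    have : P.Nonempty := ⟨_, hPij⟩
    exact_mod_cast Finset.card_pos.mpr this
  -- adjacency values in E1
  have hain : aInd E1 s(i, ui) = 1 := by
    unfold aInd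
    rw [if_pos ((mem_E1_iff hER ha1 hi hui).mpr (by rw [hui_def, anch1_lab]))]
  have haout : aInd E1 s(j, ui) = 0 := by
    unfold aInd
    rw [if_neg]
    intro h
    have := (mem_E1_iff hER ha1 hj hui).mp h
    rw [hui_def, anch1_lab] at this
    exact hij this
  -- zInd values
  have hz1 : zInd Z s(i, ui) = 1 := by rw [zInd_mk, if_pos (by rw [hZi, hZui])]
  have hz0 : zInd Z s(i, j) = 0 := by rw [zInd_mk, if_neg (by rw [hZi, hZj]; exact hZ)]
  -- sigma positivity
  have hsA1 : 0 < sigmaAC VR VSU E1 := by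
    rw [sigmaAC]
    apply Real.sqrt_pos.mpr
    apply div_pos _ hNpos
    exact sum_sq_pos hPiui hPjui (by rw [hain, haout]; norm_num)
  have hsZ : 0 < sigmaZC VR VSU Z := by
    rw [sigmaZC]
    apply Real.sqrt_pos.mpr
    apply div_pos _ hNpos
    exact sum_sq_pos hPiui hPij (by rw [hz1, hz0]; norm_num)
  have hAbar : AbarC VR VSU E1 = AbarC VR VSU E2 := by
    unfold AbarC; rw [hcard]
  have hsA2 : sigmaAC VR VSU E2 = sigmaAC VR VSU E1 := by
    unfold sigmaAC
    rw [sum_sq_indicator hsub1, sum_sq_indicator hsub2, hAbar, hcard]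
  refine ⟨VSU, E1, Z, VSU, E2, Z,
    compat_of_anchor hER hd _ ha1 (fun k hk => card_filter_anch1 hk),
    compat_of_anchor hER hd _ ha2 (fun k hk => card_filter_anch2 hi hj hij hspi hspj hk),
    hsA1, hsZ, hsA2 ▸ hsA1, hsZ, ?_⟩
  -- homophily values differ
  unfold homophilyC
  rw [hsA2, ← hAbar]
  set c := AbarC VR VSU E1 with hc
  set zb := ZbarC VR VSU Z with hzb
  set D := (P.card : ℝ) * sigmaAC VR VSU E1 * sigmaZC VR VSU Z with hD
  have hDpos : 0 < D := mul_pos (mul_pos hNpos hsA1) hsZ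
  have hnum : (∑ e ∈ P, (aInd E1 e - c) * (zInd Z e - zb))
      - (∑ e ∈ P, (aInd E2 e - c) * (zInd Z e - zb)) = 2 := by
    rw [sum_numerator hsub1, sum_numerator hsub2, hcard]
    have hexp : (∑ e ∈ E1, zInd Z e) - (∑ e ∈ E2, zInd Z e)
        = ∑ u ∈ Uset VR ER d,
            (zInd Z s(u, anch1 VR u) - zInd Z s(u, anch2 VR i j u)) := by
      rw [hE1, hE2, sum_constructed hER ha1, sum_constructed hER ha2,
        Finset.sum_sub_distrib]
      ring
    have hsplit : ∑ u ∈ Uset VR ER d,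
        (zInd Z s(u, anch1 VR u) - zInd Z s(u, anch2 VR i j u)) = 2 := by
      rw [← Finset.sum_subset (Finset.insert_subset hui (Finset.singleton_subset_iff.mpr huj))
        (by
          intro u hu hnot
          simp only [Finset.mem_insert, Finset.mem_singleton, not_or] at hnot
          have : anch2 VR i j u = anch1 VR u := by
            unfold anch2
            rw [if_neg hnot.1, if_neg hnot.2]
          rw [this, sub_self])]
      rw [Finset.sum_pair (ui_ne_uj hij)]
      have e1 : anch1 VR ui = i := by rw [hui_def, anch1_lab]
      have e2 : anch1 VR uj = j := by rw [huj_def, anch1_lab]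
      have e3 : anch2 VR i j ui = j := by unfold anch2; rw [if_pos rfl]
      have e4 : anch2 VR i j uj = i := by
        unfold anch2; rw [if_neg (ui_ne_uj hij).symm, if_pos rfl]
      rw [e1, e2, e3, e4]
      have v1 : zInd Z s(ui, i) = 1 := by rw [zInd_mk, if_pos (by rw [hZi, hZui])]
      have v2 : zInd Z s(uj, j) = 1 := by rw [zInd_mk, if_pos (by rw [hZj, hZuj])]
      have v3 : zInd Z s(ui, j) = 0 := by
        rw [zInd_mk, if_neg (by rw [hZj, hZui]; exact hZ)]
      have v4 : zInd Z s(uj, i) = 0 := by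
        rw [zInd_mk, if_neg (by rw [hZi, hZuj]; exact fun h => hZ h.symm)]
      rw [v1, v2, v3, v4]
      norm_num
    linarith [hexp, hsplit]
  intro heq
  rw [div_eq_div_iff (ne_of_gt hDpos) (ne_of_gt hDpos)] at heq
  have := mul_right_cancel₀ (ne_of_gt hDpos) heq
  rw [this, sub_self] at hnum
  norm_num at hnum

end RDS
end

section
/- Suppose d_k ≥ d_k^r for every k ∈ V_R, and there exists a vertex i ∈ V_R with d_i > d_i^r that recruited at least one other vertex (i.e., there is k ∈ V_R with (i,k) ∈ E_R). Then the subgraph preferential recruitment is not point identified: there exist two compatible pairs (G¹_SU, Z¹_SU) and (G²_SU, Z²_SU) with p(G¹_SU, Z¹_SU) ≠ p(G²_SU, Z²_SU). -/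
open Finset

namespace RDS

/-- `S_i(t_j)`: susceptible neighbors of `i` (within the vertex set `Vfin`, w.r.t. the
edge set `E`) just before the recruitment of `j`: neighbors outside `V_R` together with
non-seed neighbors in `V_R` whose recruitment label is `≥ j`. -/
def Ssusc (Vfin VR M : Finset ℕ) (E : Edges) (i j : ℕ) : Finset ℕ :=
  Vfin.filter (fun k => s(i, k) ∈ E ∧ (k ∉ VR ∨ (k ∈ VR ∧ k ∉ M ∧ j ≤ k)))

/-- `same(i, S)`: the number of elements of `S` sharing the trait of `i`. -/
def same (Z : ℕ → Bool) (i : ℕ) (S : Finset ℕ) : ℕ := (S.filter (fun k => Z k = Z i)).card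

/-- Subgraph preferential recruitment
`p = (1/(n−|M|)) ∑_{j ∈ V_R \ M} (Y_j − same(r_j, S_{r_j}(t_j)) / |S_{r_j}(t_j)|)`. -/
noncomputable def prefRec (Vfin VR M : Finset ℕ) (E : Edges) (Z : ℕ → Bool) (r : ℕ → ℕ) : ℝ :=
  (∑ j ∈ VR \ M, ((if Z j = Z (r j) then (1 : ℝ) else 0)
      - (same Z (r j) (Ssusc Vfin VR M E (r j) j) : ℝ) / ((Ssusc Vfin VR M E (r j) j).card : ℝ)))
    / (((VR \ M).card : ℝ))

section Construction
variable (VR : Finset ℕ) (ER : Finset (ℕ × ℕ)) (d : ℕ → ℕ)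
def freshBase : ℕ := VR.sup id + 1
def fresh (v t : ℕ) : ℕ := freshBase VR + Nat.pair v t
lemma lt_fresh {v : ℕ} (h : v ∈ VR) (w t : ℕ) : v < fresh VR w t :=
  lt_of_lt_of_le (Nat.lt_succ_of_le (Finset.le_sup (f := id) h)) (Nat.le_add_right _ _)
lemma fresh_not_mem (w t : ℕ) : fresh VR w t ∉ VR :=
  fun h => lt_irrefl _ (lt_fresh VR h w t)
lemma fresh_ne {v : ℕ} (h : v ∈ VR) (w t : ℕ) : v ≠ fresh VR w t :=
  Nat.ne_of_lt (lt_fresh VR h w t)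
lemma fresh_inj {v t w s : ℕ} (h : fresh VR v t = fresh VR w s) : v = w ∧ t = s :=
  Nat.pair_eq_pair.mp (Nat.add_left_cancel h)
def pendIdx : Finset (ℕ × ℕ) :=
  VR.biUnion (fun v => (Finset.range (d v - dRec ER v)).image (Prod.mk v))
lemma mem_pendIdx {p : ℕ × ℕ} :
    p ∈ pendIdx VR ER d ↔ p.1 ∈ VR ∧ p.2 < d p.1 - dRec ER p.1 := by
  obtain ⟨v, t⟩ := p
  simp only [pendIdx, Finset.mem_biUnion, Finset.mem_image, Finset.mem_range, Prod.mk.injEq]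
  constructor
  · rintro ⟨a, ha, t', ht', rfl, rfl⟩; exact ⟨ha, ht'⟩
  · rintro ⟨hv, ht⟩; exact ⟨v, hv, t, ht, rfl, rfl⟩
def pend : Edges := (pendIdx VR ER d).image (fun p => s(p.1, fresh VR p.1 p.2))
def ESUc : Edges := uRec ER ∪ pend VR ER d
def VSUc : Finset ℕ := VR ∪ (pendIdx VR ER d).image (fun p => fresh VR p.1 p.2)

lemma uRec_endpoints (hER : ∀ p ∈ ER, p.1 ∈ VR ∧ p.2 ∈ VR ∧ p.1 ≠ p.2)
    {e : Sym2 ℕ} (he : e ∈ uRec ER) : ∀ x ∈ e, x ∈ VR := by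
  simp only [uRec, Finset.mem_image] at he
  obtain ⟨p, hp, rfl⟩ := he
  obtain ⟨h1, h2, -⟩ := hER p hp
  intro x hx
  rcases Sym2.mem_iff.mp hx with rfl | rfl <;> assumption

lemma pend_filter_eq {v : ℕ} (hv : v ∈ VR) :
    (pend VR ER d).filter (fun e => v ∈ e)
      = (Finset.range (d v - dRec ER v)).image (fun t => s(v, fresh VR v t)) := by
  ext e
  simp only [pend, Finset.mem_filter, Finset.mem_image, Finset.mem_range]
  constructor
  · rintro ⟨⟨⟨w, t⟩, hp, rfl⟩, hve⟩
    rw [mem_pendIdx] at hp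
    rcases Sym2.mem_iff.mp hve with rfl | h
    · exact ⟨t, hp.2, rfl⟩
    · exact absurd h (fresh_ne VR hv w t)
  · rintro ⟨t, ht, rfl⟩
    refine ⟨⟨(v, t), ?_, rfl⟩, Sym2.mem_mk_left _ _⟩
    rw [mem_pendIdx]; exact ⟨hv, ht⟩

lemma degE_pend {v : ℕ} (hv : v ∈ VR) : degE (pend VR ER d) v = d v - dRec ER v := by
  rw [degE, pend_filter_eq VR ER d hv, Finset.card_image_of_injective, Finset.card_range]
  intro a b hab
  rcases Sym2.eq_iff.mp hab with ⟨-, h⟩ | ⟨h, -⟩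
  · exact (fresh_inj VR h).2
  · exact absurd h (fresh_ne VR hv v b)

lemma degE_ESUc (hER : ∀ p ∈ ER, p.1 ∈ VR ∧ p.2 ∈ VR ∧ p.1 ≠ p.2)
    (hd : ∀ k ∈ VR, dRec ER k ≤ d k) {v : ℕ} (hv : v ∈ VR) :
    degE (ESUc VR ER d) v = d v := by
  have hdisj : Disjoint ((uRec ER).filter (fun e => v ∈ e))
      ((pend VR ER d).filter (fun e => v ∈ e)) := by
    rw [Finset.disjoint_left]
    rintro e he1 he2
    rw [Finset.mem_filter] at he1 he2
    obtain ⟨he1, -⟩ := he1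
    obtain ⟨he2, -⟩ := he2
    simp only [pend, Finset.mem_image] at he2
    obtain ⟨⟨w, t⟩, -, rfl⟩ := he2
    exact fresh_not_mem VR w t
      (uRec_endpoints VR ER hER he1 _ (Sym2.mem_mk_right _ _))
  rw [ESUc, degE, Finset.filter_union, Finset.card_union_of_disjoint hdisj]
  have : dRec ER v + (d v - dRec ER v) = d v := Nat.add_sub_cancel' (hd v hv)
  rw [← degE_pend VR ER d hv] at this
  exact this

lemma mem_ESUc_fresh (hER : ∀ p ∈ ER, p.1 ∈ VR ∧ p.2 ∈ VR ∧ p.1 ≠ p.2)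
    {x w t : ℕ} (h : s(x, fresh VR w t) ∈ ESUc VR ER d) :
    x = w ∧ (w, t) ∈ pendIdx VR ER d := by
  rw [ESUc, Finset.mem_union] at h
  rcases h with h | h
  · exact absurd (uRec_endpoints VR ER hER h _ (Sym2.mem_mk_right _ _))
      (fresh_not_mem VR w t)
  · simp only [pend, Finset.mem_image] at h
    obtain ⟨⟨w', t'⟩, hp, he⟩ := h
    simp only at he hp ⊢
    rcases Sym2.eq_iff.mp he with ⟨h1, h2⟩ | ⟨h1, h2⟩
    · obtain ⟨rfl, rfl⟩ := fresh_inj VR h2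
      exact ⟨h1.symm, hp⟩
    · obtain ⟨hw', -⟩ := (mem_pendIdx VR ER d).mp hp
      rw [h1] at hw'
      exact absurd hw' (fresh_not_mem VR w t)
end Construction

section Construction2
variable (VR : Finset ℕ) (ER : Finset (ℕ × ℕ)) (d : ℕ → ℕ)

lemma compat_ESUc (hER : ∀ p ∈ ER, p.1 ∈ VR ∧ p.2 ∈ VR ∧ p.1 ≠ p.2)
    (hd : ∀ k ∈ VR, dRec ER k ≤ d k)
    {ZR Z : ℕ → Bool} (hZ : ∀ x ∈ VR, Z x = ZR x) :
    Compat VR ER d ZR (VSUc VR ER d) (ESUc VR ER d) Z := by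
  constructor
  · intro e he
    rw [ESUc, Finset.mem_union] at he
    rcases he with he | he
    · simp only [uRec, Finset.mem_image] at he
      obtain ⟨p, hp, rfl⟩ := he
      rw [Sym2.mk_isDiag_iff]
      exact (hER p hp).2.2
    · simp only [pend, Finset.mem_image] at he
      obtain ⟨⟨w, t⟩, hp, rfl⟩ := he
      rw [Sym2.mk_isDiag_iff]
      exact fresh_ne VR ((mem_pendIdx VR ER d).mp hp).1 w t
  · exact Finset.subset_union_left
  · intro e he v hv
    rw [ESUc, Finset.mem_union] at he
    rw [VSUc, Finset.mem_union]
    rcases he with he | he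
    · exact Or.inl (uRec_endpoints VR ER hER he v hv)
    · simp only [pend, Finset.mem_image] at he
      obtain ⟨⟨w, t⟩, hp, rfl⟩ := he
      rcases Sym2.mem_iff.mp hv with rfl | rfl
      · exact Or.inl ((mem_pendIdx VR ER d).mp hp).1
      · exact Or.inr (Finset.mem_image_of_mem _ hp)
  · intro p hp
    exact Finset.mem_union_left _ (Finset.mem_image_of_mem _ hp)
  · exact hZ
  · intro v hv hvVR
    rw [VSUc, Finset.mem_union] at hv
    rcases hv with hv | hv
    · exact absurd hv hvVR
    · simp only [Finset.mem_image] at hv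
      obtain ⟨⟨w, t⟩, hp, rfl⟩ := hv
      refine ⟨w, ((mem_pendIdx VR ER d).mp hp).1, ?_⟩
      rw [Sym2.eq_swap]
      exact Finset.mem_union_right _ (Finset.mem_image_of_mem _ hp)
  · intro e he
    rw [ESUc, Finset.mem_union] at he
    rcases he with he | he
    · simp only [uRec, Finset.mem_image] at he
      obtain ⟨p, hp, rfl⟩ := he
      exact ⟨p.1, Sym2.mem_mk_left _ _, (hER p hp).1⟩
    · simp only [pend, Finset.mem_image] at he
      obtain ⟨⟨w, t⟩, hp, rfl⟩ := he
      exact ⟨w, Sym2.mem_mk_left _ _, ((mem_pendIdx VR ER d).mp hp).1⟩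
  · intro v hv
    exact degE_ESUc VR ER d hER hd hv

end Construction2

/-- If some `i ∈ V_R` with unused degree (`d_i > d_i^r`) recruited at
least one other vertex, then the subgraph preferential recruitment is not point identified:
there are two compatible pairs whose preferential recruitment values differ. -/
theorem prefrec_not_point_identified
    (VR M : Finset ℕ) (ER : Finset (ℕ × ℕ)) (d : ℕ → ℕ) (ZR : ℕ → Bool) (r : ℕ → ℕ)
    (hM : M ⊆ VR)
    (hER : ∀ p ∈ ER, p.1 ∈ VR ∧ p.2 ∈ VR ∧ p.1 ≠ p.2)
    -- seeds are not recruited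
    (hseed : ∀ j ∈ M, ∀ a, (a, j) ∉ ER)
    -- every non-seed `j` has the unique recruiter `r j`
    (hrec : ∀ j ∈ VR \ M, (r j, j) ∈ ER ∧ ∀ a, (a, j) ∈ ER → a = r j)
    (hd : ∀ k ∈ VR, dRec ER k ≤ d k)
    (i k : ℕ) (hi : i ∈ VR) (hik : (i, k) ∈ ER) (hdi : dRec ER i < d i) :
    ∃ (VSU₁ : Finset ℕ) (ESU₁ : Edges) (Z₁ : ℕ → Bool)
      (VSU₂ : Finset ℕ) (ESU₂ : Edges) (Z₂ : ℕ → Bool),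
      Compat VR ER d ZR VSU₁ ESU₁ Z₁ ∧
      Compat VR ER d ZR VSU₂ ESU₂ Z₂ ∧
      prefRec VSU₁ VR M ESU₁ Z₁ r ≠ prefRec VSU₂ VR M ESU₂ Z₂ r := by
  classical
  set u := fresh VR i 0 with hu
  have hkVR : k ∈ VR := (hER _ hik).2.1
  have hkM : k ∉ M := fun h => hseed k h i hik
  have hkd : k ∈ VR \ M := Finset.mem_sdiff.mpr ⟨hkVR, hkM⟩
  have hiu : (i, 0) ∈ pendIdx VR ER d := (mem_pendIdx VR ER d).mpr ⟨hi, by show 0 < d i - dRec ER i; omega⟩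
  have huVR : u ∉ VR := fresh_not_mem VR i 0
  set V := VSUc VR ER d with hV
  set E := ESUc VR ER d with hE
  have huV : u ∈ V := Finset.mem_union_right _ (Finset.mem_image_of_mem _ hiu)
  have hiuE : s(i, u) ∈ E := Finset.mem_union_right _ (Finset.mem_image_of_mem _ hiu)
  set Z₁ : ℕ → Bool := fun x => if x = u then ZR i else ZR x with hZ1
  set Z₂ : ℕ → Bool := fun x => if x = u then !(ZR i) else ZR x with hZ2
  have hZ1VR : ∀ x ∈ VR, Z₁ x = ZR x := fun x hx => if_neg (fun (h : x = u) => huVR (h ▸ hx))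
  have hZ2VR : ∀ x ∈ VR, Z₂ x = ZR x := fun x hx => if_neg (fun (h : x = u) => huVR (h ▸ hx))
  refine ⟨V, E, Z₁, V, E, Z₂, compat_ESUc VR ER d hER hd hZ1VR,
    compat_ESUc VR ER d hER hd hZ2VR, ?_⟩
  have hcard : (0:ℝ) < ((VR \ M).card : ℝ) := by
    exact_mod_cast Finset.card_pos.mpr ⟨k, hkd⟩
  have main : ∀ j ∈ VR \ M,
      ((if Z₁ j = Z₁ (r j) then (1:ℝ) else 0)
        - (same Z₁ (r j) (Ssusc V VR M E (r j) j) : ℝ) / ((Ssusc V VR M E (r j) j).card : ℝ)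
      ≤ (if Z₂ j = Z₂ (r j) then (1:ℝ) else 0)
        - (same Z₂ (r j) (Ssusc V VR M E (r j) j) : ℝ) / ((Ssusc V VR M E (r j) j).card : ℝ))
      ∧ (r j = i →
      (if Z₁ j = Z₁ (r j) then (1:ℝ) else 0)
        - (same Z₁ (r j) (Ssusc V VR M E (r j) j) : ℝ) / ((Ssusc V VR M E (r j) j).card : ℝ)
      < (if Z₂ j = Z₂ (r j) then (1:ℝ) else 0)
        - (same Z₂ (r j) (Ssusc V VR M E (r j) j) : ℝ) / ((Ssusc V VR M E (r j) j).card : ℝ)) := by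
    intro j hj
    obtain ⟨hjVR, hjM⟩ := Finset.mem_sdiff.mp hj
    have hrj : (r j, j) ∈ ER := (hrec j hj).1
    have hrjVR : r j ∈ VR := (hER _ hrj).1
    set S := Ssusc V VR M E (r j) j with hS
    have hjS : j ∈ S := by
      rw [hS, Ssusc, Finset.mem_filter]
      exact ⟨Finset.mem_union_left _ hjVR,
        Finset.mem_union_left _ (Finset.mem_image_of_mem _ hrj),
        Or.inr ⟨hjVR, hjM, le_refl j⟩⟩
    have hScard : (0:ℝ) < (S.card : ℝ) := by
      exact_mod_cast Finset.card_pos.mpr ⟨j, hjS⟩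
    have hind : (Z₁ j = Z₁ (r j)) ↔ (Z₂ j = Z₂ (r j)) := by
      rw [hZ1VR j hjVR, hZ1VR (r j) hrjVR, hZ2VR j hjVR, hZ2VR (r j) hrjVR]
    by_cases hri : r j = i
    · have huS : u ∈ S := by
        rw [hS, Ssusc, Finset.mem_filter, hri]
        exact ⟨huV, hiuE, Or.inl huVR⟩
      have hZ1u : Z₁ u = ZR i := if_pos rfl
      have hZ2u : Z₂ u = !(ZR i) := if_pos rfl
      have hu1 : u ∈ S.filter (fun x => Z₁ x = Z₁ (r j)) := by
        rw [Finset.mem_filter, hZ1u, hri, hZ1VR i hi]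
        exact ⟨huS, rfl⟩
      have hfe : S.filter (fun x => Z₂ x = Z₂ (r j))
          = (S.filter (fun x => Z₁ x = Z₁ (r j))).erase u := by
        ext x
        rw [Finset.mem_erase, Finset.mem_filter, Finset.mem_filter]
        by_cases hx : x = u
        · subst hx
          rw [hZ2u, hri, hZ2VR i hi]
          simp
        · have e1 : Z₂ x = Z₁ x := by rw [hZ1, hZ2]; simp [hx]
          have e2 : Z₂ (r j) = Z₁ (r j) := by rw [hZ2VR (r j) hrjVR, hZ1VR (r j) hrjVR]
          rw [e1, e2]
          tauto
      have hsame : same Z₁ (r j) S = same Z₂ (r j) S + 1 := by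
        rw [same, same, hfe, Finset.card_erase_of_mem hu1]
        have := Finset.card_pos.mpr ⟨u, hu1⟩
        omega
      have hlt : (same Z₂ (r j) S : ℝ) / (S.card : ℝ) < (same Z₁ (r j) S : ℝ) / (S.card : ℝ) := by
        rw [hsame]
        push_cast
        have h1 : (same Z₂ (r j) S : ℝ) < (same Z₂ (r j) S : ℝ) + 1 := by linarith
        exact div_lt_div_of_pos_right h1 hScard
      constructor
      · rw [if_congr hind rfl rfl]; linarith
      · intro _; rw [if_congr hind rfl rfl]; linarith
    · have hsame : same Z₁ (r j) S = same Z₂ (r j) S := by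
        rw [same, same]
        congr 1
        apply Finset.filter_congr
        intro x hxS
        have hxu : x ≠ u := by
          rintro rfl
          rw [hS, Ssusc, Finset.mem_filter] at hxS
          exact hri (mem_ESUc_fresh VR ER d hER hxS.2.1).1
        have e1 : Z₁ x = Z₂ x := by rw [hZ1, hZ2]; simp [hxu]
        have e2 : Z₁ (r j) = Z₂ (r j) := by rw [hZ2VR (r j) hrjVR, hZ1VR (r j) hrjVR]
        rw [e1, e2]
      rw [if_congr hind rfl rfl, hsame]
      exact ⟨le_refl _, fun h => absurd h hri⟩
  have hrk : r k = i := ((hrec k hkd).2 i hik).symm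
  have hsum : ∑ j ∈ VR \ M, ((if Z₁ j = Z₁ (r j) then (1:ℝ) else 0)
        - (same Z₁ (r j) (Ssusc V VR M E (r j) j) : ℝ) / ((Ssusc V VR M E (r j) j).card : ℝ))
      < ∑ j ∈ VR \ M, ((if Z₂ j = Z₂ (r j) then (1:ℝ) else 0)
        - (same Z₂ (r j) (Ssusc V VR M E (r j) j) : ℝ) / ((Ssusc V VR M E (r j) j).card : ℝ)) :=
    Finset.sum_lt_sum (fun j hj => (main j hj).1) ⟨k, hkd, (main k hkd).2 hrk⟩
  unfold prefRec
  exact ne_of_lt ((div_lt_div_iff_of_pos_right hcard).mpr hsum)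

end RDS
end

section
/- Let (G¹_SU, Z¹) be a compatible pair; let i, j ∈ V_R with Z_i = 0 and Z_j = 1; and let u₁, u₂ be distinct unsampled vertices with Z¹(u₁) = 0, Z¹(u₂) = 1, {i,u₁} ∈ E¹_SU, {j,u₂} ∈ E¹_SU, {i,u₂} ∉ E¹_SU, and {j,u₁} ∉ E¹_SU. Let (G²_SU, Z²) be obtained from (G¹_SU, Z¹) by replacing the edges {i,u₁} and {j,u₂} with the edges {i,u₂} and {j,u₁}, keeping all other edges, all vertices, and all traits unchanged. Then: (a) (G²_SU, Z²) is compatible with the observed data; (b) the quantities N_P, Ā, Z̄, σ(A), and σ(Z) coincide for the two pairs; and (c) whenever σ(A) > 0 and σ(Z) > 0, h(G¹_SU, Z¹) − h(G²_SU, Z²) = 2/(N_P · σ(A) · σ(Z)) > 0. -/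
open Finset

namespace RDS

lemma aInd_mem {E : Edges} {e : Sym2 ℕ} (h : e ∈ E) : aInd E e = 1 := if_pos h

lemma aInd_notMem {E : Edges} {e : Sym2 ℕ} (h : e ∉ E) : aInd E e = 0 := if_neg h

lemma mem_pairsP_s6 {VR VSU : Finset ℕ} {a b : ℕ} (ha : a ∈ VR) (hb : b ∈ VSU) (hab : a ≠ b) :
    s(a, b) ∈ pairsP VR VSU :=
  Finset.mem_image.mpr ⟨(a, b), Finset.mem_filter.mpr ⟨Finset.mem_product.mpr ⟨ha, hb⟩, hab⟩, rfl⟩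

lemma edges_subset_pairsP {VR VSU : Finset ℕ} {E : Edges}
    (hl : ∀ e ∈ E, ¬ e.IsDiag) (hs : ∀ e ∈ E, ∀ v ∈ e, v ∈ VSU)
    (hn : ∀ e ∈ E, ∃ v ∈ e, v ∈ VR) : E ⊆ pairsP VR VSU := by
  intro e he
  induction e using Sym2.ind with
  | _ a b =>
    obtain ⟨v, hv, hvR⟩ := hn _ he
    have ha : a ∈ VSU := hs _ he a (by simp)
    have hb : b ∈ VSU := hs _ he b (by simp)
    have hab : a ≠ b := by intro h; exact hl _ he (by simp [h])
    rcases Sym2.mem_iff.mp hv with rfl | rfl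
    · exact mem_pairsP_s6 hvR hb hab
    · rw [Sym2.eq_swap]; exact mem_pairsP_s6 hvR ha hab.symm

lemma sum_sq_aInd (P E : Edges) (hE : E ⊆ P) (c : ℝ) :
    ∑ e ∈ P, (aInd E e - c) ^ 2
      = (E.card : ℝ) * (1 - c) ^ 2 + ((P.card : ℝ) - (E.card : ℝ)) * (0 - c) ^ 2 := by
  rw [← Finset.sum_sdiff hE]
  have h1 : ∀ e ∈ E, (aInd E e - c) ^ 2 = (1 - c) ^ 2 := fun e he => by rw [aInd_mem he]
  have h2 : ∀ e ∈ P \ E, (aInd E e - c) ^ 2 = (0 - c) ^ 2 := fun e he => by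
    rw [aInd_notMem (Finset.mem_sdiff.mp he).2]
  rw [Finset.sum_congr rfl h1, Finset.sum_congr rfl h2, Finset.sum_const, Finset.sum_const,
    Finset.card_sdiff_of_subset hE, nsmul_eq_mul, nsmul_eq_mul, Nat.cast_sub (Finset.card_le_card hE)]
  ring

/-- Swapping the pendant edges `{i,u₁}, {j,u₂}` for `{i,u₂}, {j,u₁}`
(where `Z i = Z u₁ = 0` and `Z j = Z u₂ = 1`) yields another compatible pair which leaves
`N_P`, `Ā`, `Z̄`, `σ(A)`, `σ(Z)` unchanged and decreases the homophily by exactly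
`2 / (N_P · σ(A) · σ(Z)) > 0`. -/
theorem homophily_swap_difference
    (VR : Finset ℕ) (ER : Finset (ℕ × ℕ)) (d : ℕ → ℕ) (ZR : ℕ → Bool)
    (VSU : Finset ℕ) (ESU : Edges) (Z : ℕ → Bool)
    (hER : ∀ p ∈ ER, p.1 ∈ VR ∧ p.2 ∈ VR)
    (hc : Compat VR ER d ZR VSU ESU Z)
    (i j u₁ u₂ : ℕ)
    (hi : i ∈ VR) (hj : j ∈ VR)
    (hZi : Z i = false) (hZj : Z j = true)
    (hu₁ : u₁ ∈ VSU) (hu₁' : u₁ ∉ VR)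
    (hu₂ : u₂ ∈ VSU) (hu₂' : u₂ ∉ VR)
    (huu : u₁ ≠ u₂)
    (hZu₁ : Z u₁ = false) (hZu₂ : Z u₂ = true)
    (hiu₁ : s(i, u₁) ∈ ESU) (hju₂ : s(j, u₂) ∈ ESU)
    (hiu₂ : s(i, u₂) ∉ ESU) (hju₁ : s(j, u₁) ∉ ESU)
    -- the modified edge set: replace {i,u₁} and {j,u₂} by {i,u₂} and {j,u₁}
    (ESU₂ : Edges)
    (hESU₂ : ESU₂ = insert s(i, u₂) (insert s(j, u₁) ((ESU.erase s(i, u₁)).erase s(j, u₂)))) :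
    -- (a) the modified pair is compatible with the observed data
    Compat VR ER d ZR VSU ESU₂ Z ∧
    -- (b) the summary quantities of the two pairs coincide
    -- (`N_P`, `Z̄` and `σ(Z)` coincide since the two pairs share `V_R`, `V_SU` and `Z`)
    ESU₂.card = ESU.card ∧
    AbarC VR VSU ESU₂ = AbarC VR VSU ESU ∧
    sigmaAC VR VSU ESU₂ = sigmaAC VR VSU ESU ∧
    -- (c) whenever σ(A) > 0 and σ(Z) > 0, h₁ − h₂ = 2/(N_P·σ(A)·σ(Z)) > 0
    (0 < sigmaAC VR VSU ESU → 0 < sigmaZC VR VSU Z →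
      homophilyC VR VSU ESU Z - homophilyC VR VSU ESU₂ Z =
        2 / (((pairsP VR VSU).card : ℝ) * sigmaAC VR VSU ESU * sigmaZC VR VSU Z) ∧
      0 < homophilyC VR VSU ESU Z - homophilyC VR VSU ESU₂ Z) := by
  subst hESU₂
  -- basic inequalities between the vertices
  have hij : i ≠ j := by intro h; rw [h, hZj] at hZi; simp at hZi
  have hji : j ≠ i := hij.symm
  have hiu1n : i ≠ u₁ := fun h => hu₁' (h ▸ hi)
  have hiu2n : i ≠ u₂ := fun h => hu₂' (h ▸ hi)
  have hju1n : j ≠ u₁ := fun h => hu₁' (h ▸ hj)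
  have hju2n : j ≠ u₂ := fun h => hu₂' (h ▸ hj)
  have huu' : u₂ ≠ u₁ := huu.symm
  -- inequalities between the four relevant edges
  have d12 : s(i, u₁) ≠ s(j, u₂) := by simp [Sym2.eq_iff, hij, hiu2n]
  have d1f1 : s(i, u₁) ≠ s(i, u₂) := by simp [Sym2.eq_iff, huu, hiu2n]
  have d1f2 : s(i, u₁) ≠ s(j, u₁) := by simp [Sym2.eq_iff, hij, hiu1n]
  have d2f1 : s(j, u₂) ≠ s(i, u₂) := by simp [Sym2.eq_iff, hji, hju2n]
  have d2f2 : s(j, u₂) ≠ s(j, u₁) := by simp [Sym2.eq_iff, huu', hju1n]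
  have df : s(i, u₂) ≠ s(j, u₁) := by simp [Sym2.eq_iff, hij, hiu1n]
  -- membership facts for the modified edge set
  have hf1mem : s(i, u₂) ∈
      insert s(i, u₂) (insert s(j, u₁) ((ESU.erase s(i, u₁)).erase s(j, u₂))) :=
    Finset.mem_insert_self _ _
  have hf2mem : s(j, u₁) ∈
      insert s(i, u₂) (insert s(j, u₁) ((ESU.erase s(i, u₁)).erase s(j, u₂))) :=
    Finset.mem_insert_of_mem (Finset.mem_insert_self _ _)
  have he1not : s(i, u₁) ∉
      insert s(i, u₂) (insert s(j, u₁) ((ESU.erase s(i, u₁)).erase s(j, u₂))) := by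
    simp [Finset.mem_insert, Finset.mem_erase, d1f1, d1f2]
  have he2not : s(j, u₂) ∉
      insert s(i, u₂) (insert s(j, u₁) ((ESU.erase s(i, u₁)).erase s(j, u₂))) := by
    simp [Finset.mem_insert, Finset.mem_erase, d2f1, d2f2]
  have hmem : ∀ e : Sym2 ℕ, e ≠ s(i, u₁) → e ≠ s(j, u₂) → e ≠ s(i, u₂) → e ≠ s(j, u₁) →
      (e ∈ insert s(i, u₂) (insert s(j, u₁) ((ESU.erase s(i, u₁)).erase s(j, u₂))) ↔ e ∈ ESU) := by
    intro e h1 h2 h3 h4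
    simp [Finset.mem_insert, Finset.mem_erase, h1, h2, h3, h4]
  -- cardinality is preserved
  have hcard : (insert s(i, u₂) (insert s(j, u₁) ((ESU.erase s(i, u₁)).erase s(j, u₂)))).card
      = ESU.card := by
    have hmemE2 : s(j, u₂) ∈ ESU.erase s(i, u₁) := Finset.mem_erase.mpr ⟨d12.symm, hju₂⟩
    have h2' : s(j, u₁) ∉ (ESU.erase s(i, u₁)).erase s(j, u₂) := fun h =>
      hju₁ (Finset.mem_of_mem_erase (Finset.mem_of_mem_erase h))
    have h1' : s(i, u₂) ∉ insert s(j, u₁) ((ESU.erase s(i, u₁)).erase s(j, u₂)) := by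
      intro h
      rcases Finset.mem_insert.mp h with h | h
      · exact df h
      · exact hiu₂ (Finset.mem_of_mem_erase (Finset.mem_of_mem_erase h))
    rw [Finset.card_insert_of_notMem h1', Finset.card_insert_of_notMem h2',
      Finset.card_erase_of_mem hmemE2, Finset.card_erase_of_mem hiu₁]
    have : 1 < ESU.card := Finset.one_lt_card.mpr ⟨_, hiu₁, _, hju₂, d12⟩
    omega
  -- degrees are preserved
  have hdeg : ∀ v, v ≠ u₁ → v ≠ u₂ →
      degE (insert s(i, u₂) (insert s(j, u₁) ((ESU.erase s(i, u₁)).erase s(j, u₂)))) v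
        = degE ESU v := by
    intro v hv1 hv2
    unfold degE
    rw [Finset.filter_insert, Finset.filter_insert, Finset.filter_erase, Finset.filter_erase]
    by_cases hvi : v = i
    · subst hvi
      rw [if_pos (by simp), if_neg (by simp [hij, hiu1n])]
      rw [Finset.erase_eq_of_notMem
        (by simp [Finset.mem_erase, Finset.mem_filter, Sym2.mem_iff, hij, hiu2n] :
          s(j, u₂) ∉ (ESU.filter (fun e => v ∈ e)).erase s(v, u₁))]
      rw [Finset.card_insert_of_notMem
        (fun h => hiu₂ (Finset.mem_filter.mp (Finset.mem_of_mem_erase h)).1),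
        Finset.card_erase_of_mem (Finset.mem_filter.mpr ⟨hiu₁, by simp⟩)]
      have : 0 < (ESU.filter (fun e => v ∈ e)).card :=
        Finset.card_pos.mpr ⟨_, Finset.mem_filter.mpr ⟨hiu₁, by simp⟩⟩
      omega
    · by_cases hvj : v = j
      · subst hvj
        rw [if_neg (by simp [hji, hju2n]), if_pos (by simp)]
        rw [Finset.erase_eq_of_notMem
          (by simp [Finset.mem_filter, Sym2.mem_iff, hji, hju1n] :
            s(i, u₁) ∉ ESU.filter (fun e => v ∈ e))]
        rw [Finset.card_insert_of_notMem
          (fun h => hju₁ (Finset.mem_filter.mp (Finset.mem_of_mem_erase h)).1),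
          Finset.card_erase_of_mem (Finset.mem_filter.mpr ⟨hju₂, by simp⟩)]
        have : 0 < (ESU.filter (fun e => v ∈ e)).card :=
          Finset.card_pos.mpr ⟨_, Finset.mem_filter.mpr ⟨hju₂, by simp⟩⟩
        omega
      · rw [if_neg (by simp [Sym2.mem_iff, hvi, hvj, hv2]),
          if_neg (by simp [Sym2.mem_iff, hvi, hvj, hv1])]
        rw [Finset.erase_eq_of_notMem
          (by simp [Finset.mem_erase, Finset.mem_filter, Sym2.mem_iff, hvj, hv2] :
            s(j, u₂) ∉ (ESU.filter (fun e => v ∈ e)).erase s(i, u₁)),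
          Finset.erase_eq_of_notMem
          (by simp [Finset.mem_filter, Sym2.mem_iff, hvi, hv1] :
            s(i, u₁) ∉ ESU.filter (fun e => v ∈ e))]
  -- compatibility of the modified pair
  have hcompat : Compat VR ER d ZR VSU
      (insert s(i, u₂) (insert s(j, u₁) ((ESU.erase s(i, u₁)).erase s(j, u₂)))) Z := by
    constructor
    · intro e he
      rcases Finset.mem_insert.mp he with rfl | he
      · simp [Sym2.mk_isDiag_iff, hiu2n]
      · rcases Finset.mem_insert.mp he with rfl | he
        · simp [Sym2.mk_isDiag_iff, hju1n]
        · exact hc.loopless e (Finset.mem_of_mem_erase (Finset.mem_of_mem_erase he))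
    · exact hc.vr_subset
    · intro e he v hv
      rcases Finset.mem_insert.mp he with rfl | he
      · rcases Sym2.mem_iff.mp hv with rfl | rfl
        · exact hc.vr_subset hi
        · exact hu₂
      · rcases Finset.mem_insert.mp he with rfl | he
        · rcases Sym2.mem_iff.mp hv with rfl | rfl
          · exact hc.vr_subset hj
          · exact hu₁
        · exact hc.edges_subset e (Finset.mem_of_mem_erase (Finset.mem_of_mem_erase he)) v hv
    · intro p hp
      obtain ⟨hp1, hp2⟩ := hER p hp
      have hE := hc.er_subset p hp
      have ne1 : s(p.1, p.2) ≠ s(i, u₁) := by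
        intro h
        rcases Sym2.eq_iff.mp h with ⟨_, h2⟩ | ⟨h1, _⟩
        · exact hu₁' (h2 ▸ hp2)
        · exact hu₁' (h1 ▸ hp1)
      have ne2 : s(p.1, p.2) ≠ s(j, u₂) := by
        intro h
        rcases Sym2.eq_iff.mp h with ⟨_, h2⟩ | ⟨h1, _⟩
        · exact hu₂' (h2 ▸ hp2)
        · exact hu₂' (h1 ▸ hp1)
      exact Finset.mem_insert_of_mem (Finset.mem_insert_of_mem
        (Finset.mem_erase.mpr ⟨ne2, Finset.mem_erase.mpr ⟨ne1, hE⟩⟩))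
    · exact hc.trait_agree
    · intro u hu hunr
      obtain ⟨v, hvR, hvE⟩ := hc.covered u hu hunr
      by_cases h1 : s(u, v) = s(i, u₁)
      · rcases Sym2.eq_iff.mp h1 with ⟨hui, hvu⟩ | ⟨huu1, hvi⟩
        · exact absurd (show u ∈ VR by rw [hui]; exact hi) hunr
        · refine ⟨j, hj, ?_⟩
          have hswap : s(u, j) = s(j, u₁) := by rw [huu1, Sym2.eq_swap]
          rw [hswap]; exact hf2mem
      · by_cases h2 : s(u, v) = s(j, u₂)
        · rcases Sym2.eq_iff.mp h2 with ⟨huj, hvu⟩ | ⟨huu2, hvj⟩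
          · exact absurd (show u ∈ VR by rw [huj]; exact hj) hunr
          · refine ⟨i, hi, ?_⟩
            have hswap : s(u, i) = s(i, u₂) := by rw [huu2, Sym2.eq_swap]
            rw [hswap]; exact hf1mem
        · exact ⟨v, hvR, Finset.mem_insert_of_mem (Finset.mem_insert_of_mem
            (Finset.mem_erase.mpr ⟨h2, Finset.mem_erase.mpr ⟨h1, hvE⟩⟩))⟩
    · intro e he
      rcases Finset.mem_insert.mp he with rfl | he
      · exact ⟨i, by simp, hi⟩
      · rcases Finset.mem_insert.mp he with rfl | he
        · exact ⟨j, by simp, hj⟩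
        · exact hc.no_unsampled_edge e (Finset.mem_of_mem_erase (Finset.mem_of_mem_erase he))
    · intro v hv
      rw [hdeg v (fun h => hu₁' (h ▸ hv)) (fun h => hu₂' (h ▸ hv))]
      exact hc.degree_eq v hv
  -- the two edge sets are contained in the set of pairs
  have hsub : ESU ⊆ pairsP VR VSU :=
    edges_subset_pairsP hc.loopless hc.edges_subset hc.no_unsampled_edge
  have hsub₂ : insert s(i, u₂) (insert s(j, u₁) ((ESU.erase s(i, u₁)).erase s(j, u₂)))
      ⊆ pairsP VR VSU :=
    edges_subset_pairsP hcompat.loopless hcompat.edges_subset hcompat.no_unsampled_edge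
  -- Ā coincides
  have hAbar : AbarC VR VSU (insert s(i, u₂) (insert s(j, u₁)
      ((ESU.erase s(i, u₁)).erase s(j, u₂)))) = AbarC VR VSU ESU := by
    unfold AbarC; rw [hcard]
  -- σ(A) coincides
  have hsigmaA : sigmaAC VR VSU (insert s(i, u₂) (insert s(j, u₁)
      ((ESU.erase s(i, u₁)).erase s(j, u₂)))) = sigmaAC VR VSU ESU := by
    unfold sigmaAC
    rw [hAbar, sum_sq_aInd _ _ hsub₂, sum_sq_aInd _ _ hsub, hcard]
  refine ⟨hcompat, hcard, hAbar, hsigmaA, ?_⟩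
  intro hsA hsZ
  -- N_P > 0
  have hNne : ((pairsP VR VSU).card : ℝ) ≠ 0 := by
    intro h
    have : sigmaAC VR VSU ESU = 0 := by unfold sigmaAC; rw [h, div_zero, Real.sqrt_zero]
    linarith
  have hNpos : 0 < ((pairsP VR VSU).card : ℝ) :=
    lt_of_le_of_ne (Nat.cast_nonneg _) (Ne.symm hNne)
  -- the numerators differ by exactly 2
  have hnum : (∑ e ∈ pairsP VR VSU,
        (aInd ESU e - AbarC VR VSU ESU) * (zInd Z e - ZbarC VR VSU Z))
      - (∑ e ∈ pairsP VR VSU,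
        (aInd (insert s(i, u₂) (insert s(j, u₁) ((ESU.erase s(i, u₁)).erase s(j, u₂)))) e
          - AbarC VR VSU ESU) * (zInd Z e - ZbarC VR VSU Z)) = 2 := by
    rw [← Finset.sum_sub_distrib]
    have hterm : ∀ e ∈ pairsP VR VSU,
        (aInd ESU e - AbarC VR VSU ESU) * (zInd Z e - ZbarC VR VSU Z)
          - (aInd (insert s(i, u₂) (insert s(j, u₁) ((ESU.erase s(i, u₁)).erase s(j, u₂)))) e
            - AbarC VR VSU ESU) * (zInd Z e - ZbarC VR VSU Z)
        = (aInd ESU e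
            - aInd (insert s(i, u₂) (insert s(j, u₁) ((ESU.erase s(i, u₁)).erase s(j, u₂)))) e)
          * (zInd Z e - ZbarC VR VSU Z) := fun e _ => by ring
    rw [Finset.sum_congr rfl hterm]
    have hSsub : ({s(i, u₁), s(j, u₂), s(i, u₂), s(j, u₁)} : Edges) ⊆ pairsP VR VSU := by
      intro e he
      simp only [Finset.mem_insert, Finset.mem_singleton] at he
      rcases he with rfl | rfl | rfl | rfl
      · exact mem_pairsP_s6 hi hu₁ hiu1n
      · exact mem_pairsP_s6 hj hu₂ hju2n
      · exact mem_pairsP_s6 hi hu₂ hiu2n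
      · exact mem_pairsP_s6 hj hu₁ hju1n
    rw [← Finset.sum_subset hSsub]
    · have hs1 : s(i, u₁) ∉ ({s(j, u₂), s(i, u₂), s(j, u₁)} : Edges) := by
        simp [d12, d1f1, d1f2]
      have hs2 : s(j, u₂) ∉ ({s(i, u₂), s(j, u₁)} : Edges) := by simp [d2f1, d2f2]
      have hs3 : s(i, u₂) ∉ ({s(j, u₁)} : Edges) := by simp [df]
      rw [Finset.sum_insert hs1, Finset.sum_insert hs2, Finset.sum_insert hs3,
        Finset.sum_singleton]
      rw [aInd_mem hiu₁, aInd_mem hju₂, aInd_notMem hiu₂, aInd_notMem hju₁,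
        aInd_notMem he1not, aInd_notMem he2not, aInd_mem hf1mem, aInd_mem hf2mem]
      rw [zInd_mk, zInd_mk, zInd_mk, zInd_mk, hZi, hZj, hZu₁, hZu₂]
      norm_num
    · intro e _ heS
      simp only [Finset.mem_insert, Finset.mem_singleton, not_or] at heS
      obtain ⟨h1, h2, h3, h4⟩ := heS
      have hiff := hmem e h1 h2 h3 h4
      have ha : aInd (insert s(i, u₂) (insert s(j, u₁)
          ((ESU.erase s(i, u₁)).erase s(j, u₂)))) e = aInd ESU e := by
        unfold aInd; rw [if_congr hiff rfl rfl]
      rw [ha, sub_self, zero_mul]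
  unfold homophilyC
  rw [hsigmaA, hAbar, div_sub_div_same, hnum]
  have hDpos : 0 < ((pairsP VR VSU).card : ℝ) * sigmaAC VR VSU ESU * sigmaZC VR VSU Z :=
    mul_pos (mul_pos hNpos hsA) hsZ
  exact ⟨rfl, by positivity⟩


end RDS
end

section
/- Let (G¹_SU, Z¹) be a compatible pair; let i ∈ V_R with Z_i = 1 be a vertex that recruited at least one other vertex, and let u be an unsampled vertex with Z¹(u) = 1 whose only neighbor in V_R is i. Let (G²_SU, Z²) be identical to (G¹_SU, Z¹) except that Z²(u) = 0. Then (G²_SU, Z²) is compatible with the observed data, and p(G²_SU, Z²) − p(G¹_SU, Z¹) = (1/(n−|M|)) · ∑_{j : r_j = i} 1/|S_i(t_j)| > 0, where the sum ranges over the non-seed vertices j recruited by i; in particular the two compatible pairs yield different values of the subgraph preferential recruitment. -/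
open Finset

namespace RDS

/-- Flipping the trait of an unsampled vertex `u` (with `Z u = 1`)
whose only recruited neighbor is `i` (with `Z i = 1`, and `i` recruited someone) yields
another compatible pair, and
`p₂ − p₁ = (1/(n−|M|)) ∑_{j : r_j = i} 1/|S_i(t_j)| > 0`;
in particular the two compatible pairs yield different preferential recruitment values. -/
theorem prefrec_flip_difference
    (VR M : Finset ℕ) (ER : Finset (ℕ × ℕ)) (d : ℕ → ℕ) (ZR : ℕ → Bool)
    (VSU : Finset ℕ) (ESU : Edges) (Z : ℕ → Bool) (r : ℕ → ℕ)
    (hM : M ⊆ VR)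
    (hER : ∀ p ∈ ER, p.1 ∈ VR ∧ p.2 ∈ VR ∧ p.1 ≠ p.2)
    -- seeds are not recruited
    (hseed : ∀ j ∈ M, ∀ a, (a, j) ∉ ER)
    -- every non-seed `j` has the unique recruiter `r j`
    (hrec : ∀ j ∈ VR \ M, (r j, j) ∈ ER ∧ ∀ a, (a, j) ∈ ER → a = r j)
    (hc : Compat VR ER d ZR VSU ESU Z)
    (i u k : ℕ)
    (hi : i ∈ VR) (hZi : Z i = true)
    -- `i` recruited at least one other vertex
    (hik : (i, k) ∈ ER)
    (hu : u ∈ VSU) (hu' : u ∉ VR) (hZu : Z u = true)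
    -- the only neighbor of `u` in `V_R` is `i`
    (hadj : s(i, u) ∈ ESU) (honly : ∀ v ∈ VR, v ≠ i → s(v, u) ∉ ESU)
    -- the modified traits: identical except that `Z₂ u = 0`
    (Z₂ : ℕ → Bool) (hZ₂ : Z₂ = Function.update Z u false) :
    Compat VR ER d ZR VSU ESU Z₂ ∧
    prefRec VSU VR M ESU Z₂ r - prefRec VSU VR M ESU Z r =
      (∑ j ∈ (VR \ M).filter (fun j => r j = i), (1 : ℝ) / ((Ssusc VSU VR M ESU i j).card : ℝ))
        / (((VR \ M).card : ℝ)) ∧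
    0 < prefRec VSU VR M ESU Z₂ r - prefRec VSU VR M ESU Z r := by
  subst hZ₂
  have hune : ∀ v ∈ VR, v ≠ u := fun v hv h => hu' (h ▸ hv)
  have htrait : ∀ v ∈ VR, Function.update Z u false v = ZR v := by
    intro v hv
    rw [Function.update_of_ne (hune v hv)]
    exact hc.trait_agree v hv
  have hcompat : Compat VR ER d ZR VSU ESU (Function.update Z u false) :=
    { hc with trait_agree := htrait }
  have huS : ∀ j, u ∈ Ssusc VSU VR M ESU i j := fun j =>
    Finset.mem_filter.mpr ⟨hu, hadj, Or.inl hu'⟩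
  have hk : k ∈ VR \ M :=
    Finset.mem_sdiff.mpr ⟨(hER _ hik).2.1, fun hkM => hseed k hkM i hik⟩
  have hrk : r k = i := (((hrec k hk).2) i hik).symm
  have hZ₂i : Function.update Z u false i = Z i := Function.update_of_ne (hune i hi) _ _
  -- `same` drops by one on the susceptible set of `i`
  have hsame : ∀ j, (same (Function.update Z u false) i (Ssusc VSU VR M ESU i j) : ℝ)
      = (same Z i (Ssusc VSU VR M ESU i j) : ℝ) - 1 := by
    intro j
    have huf : u ∈ (Ssusc VSU VR M ESU i j).filter (fun x => Z x = Z i) :=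
      Finset.mem_filter.mpr ⟨huS j, by rw [hZu, hZi]⟩
    have h1 : (Ssusc VSU VR M ESU i j).filter
          (fun x => Function.update Z u false x = Function.update Z u false i)
        = ((Ssusc VSU VR M ESU i j).filter (fun x => Z x = Z i)).erase u := by
      ext x
      simp only [Finset.mem_erase, Finset.mem_filter]
      constructor
      · rintro ⟨hxS, hx⟩
        rcases eq_or_ne x u with rfl | hxu
        · rw [Function.update_self, hZ₂i, hZi] at hx
          exact absurd hx (by simp)
        · rw [Function.update_of_ne hxu, hZ₂i] at hx
          exact ⟨hxu, hxS, hx⟩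
      · rintro ⟨hxu, hxS, hx⟩
        rw [Function.update_of_ne hxu, hZ₂i]
        exact ⟨hxS, hx⟩
    have hle : 1 ≤ ((Ssusc VSU VR M ESU i j).filter (fun x => Z x = Z i)).card :=
      Finset.card_pos.mpr ⟨u, huf⟩
    unfold same
    rw [h1, Finset.card_erase_of_mem huf, Nat.cast_sub hle, Nat.cast_one]
  -- per-term difference
  have key : ∀ j ∈ VR \ M,
      ((if Function.update Z u false j = Function.update Z u false (r j) then (1:ℝ) else 0)
        - (same (Function.update Z u false) (r j) (Ssusc VSU VR M ESU (r j) j) : ℝ)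
          / ((Ssusc VSU VR M ESU (r j) j).card : ℝ))
      - ((if Z j = Z (r j) then (1:ℝ) else 0)
        - (same Z (r j) (Ssusc VSU VR M ESU (r j) j) : ℝ)
          / ((Ssusc VSU VR M ESU (r j) j).card : ℝ))
      = if r j = i then 1 / ((Ssusc VSU VR M ESU i j).card : ℝ) else 0 := by
    intro j hj
    obtain ⟨hjVR, hjM⟩ := Finset.mem_sdiff.mp hj
    have hrj := (hrec j hj).1
    have hrVR : r j ∈ VR := (hER _ hrj).1
    have hZj : Function.update Z u false j = Z j := Function.update_of_ne (hune j hjVR) _ _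
    have hZrj : Function.update Z u false (r j) = Z (r j) :=
      Function.update_of_ne (hune _ hrVR) _ _
    rw [hZj, hZrj]
    by_cases hri : r j = i
    · rw [if_pos hri, hri, hsame j]
      have hc0 : ((Ssusc VSU VR M ESU i j).card : ℝ) ≠ 0 := by
        have : 0 < (Ssusc VSU VR M ESU i j).card := Finset.card_pos.mpr ⟨u, huS j⟩
        exact_mod_cast this.ne'
      field_simp
      ring
    · have hnS : u ∉ Ssusc VSU VR M ESU (r j) j := by
        intro hmem
        exact honly (r j) hrVR hri (Finset.mem_filter.mp hmem).2.1
      have hsame' : same (Function.update Z u false) (r j) (Ssusc VSU VR M ESU (r j) j)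
          = same Z (r j) (Ssusc VSU VR M ESU (r j) j) := by
        unfold same
        congr 1
        apply Finset.filter_congr
        intro x hx
        have hxu : x ≠ u := fun h => hnS (h ▸ hx)
        rw [Function.update_of_ne hxu, hZrj]
      rw [hsame', if_neg hri]
      ring
    -- sum of the differences
  have hsum : (∑ j ∈ VR \ M,
        ((if Function.update Z u false j = Function.update Z u false (r j) then (1:ℝ) else 0)
          - (same (Function.update Z u false) (r j) (Ssusc VSU VR M ESU (r j) j) : ℝ)
            / ((Ssusc VSU VR M ESU (r j) j).card : ℝ)))
      - (∑ j ∈ VR \ M,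
        ((if Z j = Z (r j) then (1:ℝ) else 0)
          - (same Z (r j) (Ssusc VSU VR M ESU (r j) j) : ℝ)
            / ((Ssusc VSU VR M ESU (r j) j).card : ℝ)))
      = ∑ j ∈ (VR \ M).filter (fun j => r j = i),
          (1 : ℝ) / ((Ssusc VSU VR M ESU i j).card : ℝ) := by
    rw [← Finset.sum_sub_distrib, Finset.sum_congr rfl key, Finset.sum_filter]
  have heq : prefRec VSU VR M ESU (Function.update Z u false) r
      - prefRec VSU VR M ESU Z r
      = (∑ j ∈ (VR \ M).filter (fun j => r j = i),
          (1 : ℝ) / ((Ssusc VSU VR M ESU i j).card : ℝ)) / (((VR \ M).card : ℝ)) := by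
    unfold prefRec
    rw [div_sub_div_same, hsum]
  have hpos : 0 < (∑ j ∈ (VR \ M).filter (fun j => r j = i),
      (1 : ℝ) / ((Ssusc VSU VR M ESU i j).card : ℝ)) / (((VR \ M).card : ℝ)) := by
    apply div_pos
    · apply Finset.sum_pos'
      · intro j hj; positivity
      · refine ⟨k, Finset.mem_filter.mpr ⟨hk, hrk⟩, ?_⟩
        have h0 : (0 : ℝ) < ((Ssusc VSU VR M ESU i k).card : ℝ) := by
          exact_mod_cast Finset.card_pos.mpr ⟨u, huS k⟩
        positivity
    · exact_mod_cast Finset.card_pos.mpr ⟨k, hk⟩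
  exact ⟨hcompat, heq, heq ▸ hpos⟩

end RDS
end

section
/- Suppose d_i = d_i^r for every i ∈ V_R. Then the compatible pair is unique: every pair (G_SU, Z_SU) compatible with the observed data satisfies V_SU = V_R, E_SU equals the edge set of the undirected graph underlying G_R, and Z_SU = Z_R. Consequently any function of compatible pairs — in particular the subgraph homophily h and the subgraph preferential recruitment p, when defined — takes the same value on all compatible pairs, i.e. is point identified. -/
open Finset

namespace RDS

/-- If `d_i = d_i^r` for every `i ∈ V_R` then the compatible pair is
unique: every compatible pair has `V_SU = V_R`, edge set equal to that of the undirected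
graph underlying `G_R`, and traits equal to `Z_R` on `V_SU`. Consequently any function of
compatible pairs (depending on traits only through their restriction to `V_SU`) — in
particular the subgraph homophily and the subgraph preferential recruitment, when defined —
takes the same value on all compatible pairs, i.e. is point identified. -/
theorem point_identification_when_no_unused_degree
    (VR : Finset ℕ) (ER : Finset (ℕ × ℕ)) (d : ℕ → ℕ) (ZR : ℕ → Bool)
    (hER : ∀ p ∈ ER, p.1 ∈ VR ∧ p.2 ∈ VR ∧ p.1 ≠ p.2)
    (hd : ∀ i ∈ VR, d i = dRec ER i) :
    -- uniqueness of the compatible pair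
    (∀ (VSU : Finset ℕ) (ESU : Edges) (Z : ℕ → Bool),
      Compat VR ER d ZR VSU ESU Z →
        VSU = VR ∧ ESU = uRec ER ∧ ∀ v ∈ VSU, Z v = ZR v) ∧
    -- point identification of any function of compatible pairs
    (∀ f : Finset ℕ → Edges → (ℕ → Bool) → ℝ,
      (∀ (VSU : Finset ℕ) (ESU : Edges) (Z Z' : ℕ → Bool),
        (∀ v ∈ VSU, Z v = Z' v) → f VSU ESU Z = f VSU ESU Z') →
      ∀ (VSU₁ : Finset ℕ) (ESU₁ : Edges) (Z₁ : ℕ → Bool)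
        (VSU₂ : Finset ℕ) (ESU₂ : Edges) (Z₂ : ℕ → Bool),
        Compat VR ER d ZR VSU₁ ESU₁ Z₁ → Compat VR ER d ZR VSU₂ ESU₂ Z₂ →
        f VSU₁ ESU₁ Z₁ = f VSU₂ ESU₂ Z₂) := by
  have main : ∀ (VSU : Finset ℕ) (ESU : Edges) (Z : ℕ → Bool),
      Compat VR ER d ZR VSU ESU Z →
        VSU = VR ∧ ESU = uRec ER ∧ ∀ v ∈ VSU, Z v = ZR v := by
    intro VSU ESU Z hc
    have hsub : uRec ER ⊆ ESU := by
      intro e he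
      rcases Finset.mem_image.mp he with ⟨p, hp, rfl⟩
      exact hc.er_subset p hp
    have hfeq : ∀ i ∈ VR, (uRec ER).filter (fun e => i ∈ e) =
        ESU.filter (fun e => i ∈ e) := by
      intro i hi
      refine Finset.eq_of_subset_of_card_le
        (Finset.filter_subset_filter _ hsub) ?_
      have h1 : (ESU.filter (fun e => i ∈ e)).card = d i := hc.degree_eq i hi
      have h2 : ((uRec ER).filter (fun e => i ∈ e)).card = dRec ER i := rfl
      rw [h1, h2, hd i hi]
    have hE : ESU = uRec ER := by
      apply Finset.Subset.antisymm _ hsub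
      intro e he
      rcases hc.no_unsampled_edge e he with ⟨v, hv, hvR⟩
      have : e ∈ (uRec ER).filter (fun e => v ∈ e) := by
        rw [hfeq v hvR]; exact Finset.mem_filter.mpr ⟨he, hv⟩
      exact (Finset.mem_filter.mp this).1
    have hV : VSU = VR := by
      apply Finset.Subset.antisymm _ hc.vr_subset
      intro u hu
      by_contra huR
      rcases hc.covered u hu huR with ⟨v, hv, hedge⟩
      rw [hE] at hedge
      rcases Finset.mem_image.mp hedge with ⟨p, hp, hpe⟩
      have hmem : u ∈ s(p.1, p.2) := hpe ▸ Sym2.mem_mk_left u v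
      rcases hER p hp with ⟨h1, h2, _⟩
      rcases Sym2.mem_iff.mp hmem with h | h
      · exact huR (h ▸ h1)
      · exact huR (h ▸ h2)
    refine ⟨hV, hE, ?_⟩
    intro v hv
    exact hc.trait_agree v (hV ▸ hv)
  refine ⟨main, ?_⟩
  intro f hf VSU₁ ESU₁ Z₁ VSU₂ ESU₂ Z₂ h1 h2
  obtain ⟨hV1, hE1, hZ1⟩ := main _ _ _ h1
  obtain ⟨hV2, hE2, hZ2⟩ := main _ _ _ h2
  subst hV1 hV2 hE1 hE2
  rw [hf _ _ _ _ hZ1, hf _ _ _ _ hZ2]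

end RDS
end

section
/- Let (G_SU, Z_SU) be a pair compatible with the observed data, and let {i,j} ∈ E_SU be an edge with i ∈ V_R such that neither (i,j) nor (j,i) lies in E_R. Construct (G*, Z*) as follows: delete the edge {i,j}; add a new vertex u₁ ∉ V_SU adjacent only to i and assign it any trait z₁ ∈ {0,1}; if j ∈ V_R, also add a new vertex u₂ ∉ V_SU ∪ {u₁} adjacent only to j with any trait z₂ ∈ {0,1}; if j ∈ U and j is left with no neighbor in V_R, delete j (and its trait). Then (G*, Z*) is compatible with the observed data (G_R, d_R, Z_R). -/
open Finset

namespace RDS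

private lemma degE_insert (e : Sym2 ℕ) (E : Edges) (h : e ∉ E) (v : ℕ) :
    degE (insert e E) v = (if v ∈ e then 1 else 0) + degE E v := by
  unfold degE
  rw [Finset.filter_insert]
  split
  · rw [Finset.card_insert_of_notMem (fun hm => h (Finset.mem_filter.mp hm).1)]
    omega
  · simp

private lemma degE_erase (e : Sym2 ℕ) (E : Edges) (h : e ∈ E) (v : ℕ) :
    degE E v = degE (E.erase e) v + (if v ∈ e then 1 else 0) := by
  unfold degE
  rw [Finset.filter_erase]
  by_cases hv : v ∈ e
  · rw [if_pos hv, Finset.card_erase_of_mem (Finset.mem_filter.mpr ⟨h, hv⟩)]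
    have : 0 < (E.filter (fun e' => v ∈ e')).card :=
      Finset.card_pos.mpr ⟨e, Finset.mem_filter.mpr ⟨h, hv⟩⟩
    omega
  · rw [if_neg hv]
    have hne : e ∉ E.filter (fun e' => v ∈ e') := fun hm => hv (Finset.mem_filter.mp hm).2
    rw [Finset.erase_eq_of_notMem hne]
    exact (Nat.add_zero _).symm

/-- Deleting a non-recruitment edge `{i,j}` (with `i ∈ V_R`) from a
compatible pair and replacing it by pendant edges — a new vertex `u₁` adjacent only to `i`
with any trait `z₁`; if `j ∈ V_R`, also a new vertex `u₂` adjacent only to `j` with any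
trait `z₂`; and, if `j` is unsampled and left with no neighbor in `V_R`, deleting `j` —
yields another pair compatible with the observed data. -/
theorem delete_edge_add_pendants_compatible
    (VR : Finset ℕ) (ER : Finset (ℕ × ℕ)) (d : ℕ → ℕ) (ZR : ℕ → Bool)
    (VSU : Finset ℕ) (ESU : Edges) (Z : ℕ → Bool)
    (hER : ∀ p ∈ ER, p.1 ∈ VR ∧ p.2 ∈ VR)
    (hc : Compat VR ER d ZR VSU ESU Z)
    (i j u₁ u₂ : ℕ) (z₁ z₂ : Bool)
    (hi : i ∈ VR) (he : s(i, j) ∈ ESU)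
    (hij1 : (i, j) ∉ ER) (hij2 : (j, i) ∉ ER)
    (hu₁ : u₁ ∉ VSU) (hu₂ : u₂ ∉ VSU) (huu : u₁ ≠ u₂) :
    Compat VR ER d ZR
      -- V_SU*
      (if j ∈ VR then
        insert u₂ (insert u₁ VSU)
      else if ((VR.erase i).filter (fun v => s(v, j) ∈ ESU)).Nonempty then
        insert u₁ VSU
      else
        insert u₁ (VSU.erase j))
      -- E_SU*
      (if j ∈ VR then
        insert s(i, u₁) (insert s(j, u₂) (ESU.erase s(i, j)))
      else
        insert s(i, u₁) (ESU.erase s(i, j)))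
      -- Z*
      (if j ∈ VR then
        Function.update (Function.update Z u₁ z₁) u₂ z₂
      else
        Function.update Z u₁ z₁) := by
  have hiV : i ∈ VSU := hc.edges_subset _ he i (by simp)
  have hjV : j ∈ VSU := hc.edges_subset _ he j (by simp)
  have hij : i ≠ j := fun h => hc.loopless _ he (by simp [h])
  have hu1i : u₁ ≠ i := fun h => hu₁ (h ▸ hiV)
  have hu1j : u₁ ≠ j := fun h => hu₁ (h ▸ hjV)
  have hu2i : u₂ ≠ i := fun h => hu₂ (h ▸ hiV)
  have hu2j : u₂ ≠ j := fun h => hu₂ (h ▸ hjV)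
  have hu1VR : u₁ ∉ VR := fun h => hu₁ (hc.vr_subset h)
  have hu2VR : u₂ ∉ VR := fun h => hu₂ (hc.vr_subset h)
  have hiu1ESU : s(i, u₁) ∉ ESU := fun h => hu₁ (hc.edges_subset _ h u₁ (by simp))
  have hju2ESU : s(j, u₂) ∉ ESU := fun h => hu₂ (hc.edges_subset _ h u₂ (by simp))
  have hERsurvive : ∀ p ∈ ER, s(p.1, p.2) ≠ s(i, j) := by
    intro p hp hpe
    rw [Sym2.eq_iff] at hpe
    rcases hpe with ⟨h1, h2⟩ | ⟨h1, h2⟩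
    · exact hij1 ((Prod.ext h1 h2 : p = (i, j)) ▸ hp)
    · exact hij2 ((Prod.ext h1 h2 : p = (j, i)) ▸ hp)
  by_cases hj : j ∈ VR
  · simp only [if_pos hj]
    have h1 : s(j, u₂) ∉ ESU.erase s(i, j) := fun h => hju2ESU (Finset.mem_erase.mp h).2
    have h2 : s(i, u₁) ∉ insert s(j, u₂) (ESU.erase s(i, j)) := by
      intro h
      rcases Finset.mem_insert.mp h with h | h
      · rw [Sym2.eq_iff] at h; tauto
      · exact hiu1ESU (Finset.mem_erase.mp h).2
    constructor
    · intro e he'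
      rcases Finset.mem_insert.mp he' with rfl | he'
      · simp only [Sym2.mk_isDiag_iff]; exact fun h => hu1i h.symm
      rcases Finset.mem_insert.mp he' with rfl | he'
      · simp only [Sym2.mk_isDiag_iff]; exact fun h => hu2j h.symm
      · exact hc.loopless _ (Finset.mem_erase.mp he').2
    · exact hc.vr_subset.trans ((Finset.subset_insert _ _).trans (Finset.subset_insert _ _))
    · intro e he' v hv
      simp only [Finset.mem_insert]
      rcases Finset.mem_insert.mp he' with rfl | he'
      · rcases Sym2.mem_iff.mp hv with rfl | rfl
        · exact Or.inr (Or.inr hiV)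
        · exact Or.inr (Or.inl rfl)
      rcases Finset.mem_insert.mp he' with rfl | he'
      · rcases Sym2.mem_iff.mp hv with rfl | rfl
        · exact Or.inr (Or.inr hjV)
        · exact Or.inl rfl
      · exact Or.inr (Or.inr (hc.edges_subset _ (Finset.mem_erase.mp he').2 v hv))
    · intro p hp
      exact Finset.mem_insert.mpr (Or.inr (Finset.mem_insert.mpr (Or.inr
        (Finset.mem_erase.mpr ⟨hERsurvive p hp, hc.er_subset p hp⟩))))
    · intro v hv
      have hvu1 : v ≠ u₁ := fun h => hu1VR (h ▸ hv)
      have hvu2 : v ≠ u₂ := fun h => hu2VR (h ▸ hv)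
      simp only [Function.update_apply, if_neg hvu1, if_neg hvu2]
      exact hc.trait_agree v hv
    · intro u hu hunR
      rcases Finset.mem_insert.mp hu with rfl | hu
      · exact ⟨j, hj, Finset.mem_insert.mpr (Or.inr (Finset.mem_insert.mpr
          (Or.inl Sym2.eq_swap)))⟩
      rcases Finset.mem_insert.mp hu with rfl | hu
      · exact ⟨i, hi, Finset.mem_insert.mpr (Or.inl Sym2.eq_swap)⟩
      · obtain ⟨v, hv, hEv⟩ := hc.covered u hu hunR
        have hui : u ≠ i := fun h => hunR (h ▸ hi)
        have huj : u ≠ j := fun h => hunR (h ▸ hj)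
        refine ⟨v, hv, Finset.mem_insert.mpr (Or.inr (Finset.mem_insert.mpr (Or.inr
          (Finset.mem_erase.mpr ⟨?_, hEv⟩))))⟩
        intro hq; rw [Sym2.eq_iff] at hq; tauto
    · intro e he'
      rcases Finset.mem_insert.mp he' with rfl | he'
      · exact ⟨i, by simp, hi⟩
      rcases Finset.mem_insert.mp he' with rfl | he'
      · exact ⟨j, by simp, hj⟩
      · exact hc.no_unsampled_edge _ (Finset.mem_erase.mp he').2
    · intro v hv
      have hvu1 : v ≠ u₁ := fun h => hu1VR (h ▸ hv)
      have hvu2 : v ≠ u₂ := fun h => hu2VR (h ▸ hv)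
      have hd := hc.degree_eq v hv
      have herase := degE_erase s(i, j) ESU he v
      rw [degE_insert _ _ h2, degE_insert _ _ h1]
      simp only [Sym2.mem_iff] at herase ⊢
      split_ifs at herase ⊢ <;> omega
  · simp only [if_neg hj]
    have h2 : s(i, u₁) ∉ ESU.erase s(i, j) := fun h => hiu1ESU (Finset.mem_erase.mp h).2
    constructor
    · intro e he'
      rcases Finset.mem_insert.mp he' with rfl | he'
      · simp only [Sym2.mk_isDiag_iff]; exact fun h => hu1i h.symm
      · exact hc.loopless _ (Finset.mem_erase.mp he').2
    · by_cases hne : ((VR.erase i).filter (fun v => s(v, j) ∈ ESU)).Nonempty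
      · simp only [if_pos hne]
        exact hc.vr_subset.trans (Finset.subset_insert _ _)
      · simp only [if_neg hne]
        intro v hv
        exact Finset.mem_insert.mpr (Or.inr (Finset.mem_erase.mpr
          ⟨fun h => hj (h ▸ hv), hc.vr_subset hv⟩))
    · intro e he' v hv
      by_cases hne : ((VR.erase i).filter (fun v => s(v, j) ∈ ESU)).Nonempty
      · simp only [if_pos hne, Finset.mem_insert]
        rcases Finset.mem_insert.mp he' with rfl | he'
        · rcases Sym2.mem_iff.mp hv with rfl | rfl
          · exact Or.inr hiV
          · exact Or.inl rfl
        · exact Or.inr (hc.edges_subset _ (Finset.mem_erase.mp he').2 v hv)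
      · simp only [if_neg hne, Finset.mem_insert]
        rcases Finset.mem_insert.mp he' with rfl | he'
        · rcases Sym2.mem_iff.mp hv with rfl | rfl
          · exact Or.inr (Finset.mem_erase.mpr ⟨hij, hiV⟩)
          · exact Or.inl rfl
        · obtain ⟨hene, heE⟩ := Finset.mem_erase.mp he'
          refine Or.inr (Finset.mem_erase.mpr ⟨?_, hc.edges_subset _ heE v hv⟩)
          intro hvj
          subst hvj
          obtain ⟨w, hwe, hwVR⟩ := hc.no_unsampled_edge e heE
          have hwj : w ≠ v := fun h => hj (h ▸ hwVR)
          have heq : e = s(v, w) := (Sym2.mem_and_mem_iff (Ne.symm hwj)).mp ⟨hv, hwe⟩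
          have hwi : w ≠ i := by
            intro h; subst h; subst heq
            exact hene (Sym2.eq_swap)
          refine hne ⟨w, Finset.mem_filter.mpr ⟨Finset.mem_erase.mpr ⟨hwi, hwVR⟩, ?_⟩⟩
          rw [Sym2.eq_swap, ← heq]; exact heE
    · intro p hp
      exact Finset.mem_insert.mpr (Or.inr
        (Finset.mem_erase.mpr ⟨hERsurvive p hp, hc.er_subset p hp⟩))
    · intro v hv
      have hvu1 : v ≠ u₁ := fun h => hu1VR (h ▸ hv)
      simp only [Function.update_apply, if_neg hvu1]
      exact hc.trait_agree v hv
    · intro u hu hunR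
      by_cases hne : ((VR.erase i).filter (fun v => s(v, j) ∈ ESU)).Nonempty
      · simp only [if_pos hne] at hu
        rcases Finset.mem_insert.mp hu with rfl | hu
        · exact ⟨i, hi, Finset.mem_insert.mpr (Or.inl Sym2.eq_swap)⟩
        · by_cases huj : u = j
          · subst huj
            obtain ⟨w, hw⟩ := hne
            obtain ⟨hwVR, hwE⟩ := Finset.mem_filter.mp hw
            obtain ⟨hwi, hwVR'⟩ := Finset.mem_erase.mp hwVR
            refine ⟨w, hwVR', Finset.mem_insert.mpr (Or.inr
              (Finset.mem_erase.mpr ⟨?_, ?_⟩))⟩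
            · intro hq; rw [Sym2.eq_iff] at hq; tauto
            · rw [Sym2.eq_swap]; exact hwE
          · obtain ⟨v, hv, hEv⟩ := hc.covered u hu hunR
            have hui : u ≠ i := fun h => hunR (h ▸ hi)
            refine ⟨v, hv, Finset.mem_insert.mpr (Or.inr
              (Finset.mem_erase.mpr ⟨?_, hEv⟩))⟩
            intro hq; rw [Sym2.eq_iff] at hq; tauto
      · simp only [if_neg hne] at hu
        rcases Finset.mem_insert.mp hu with rfl | hu
        · exact ⟨i, hi, Finset.mem_insert.mpr (Or.inl Sym2.eq_swap)⟩
        · obtain ⟨huj, hu⟩ := Finset.mem_erase.mp hu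
          obtain ⟨v, hv, hEv⟩ := hc.covered u hu hunR
          have hui : u ≠ i := fun h => hunR (h ▸ hi)
          refine ⟨v, hv, Finset.mem_insert.mpr (Or.inr
            (Finset.mem_erase.mpr ⟨?_, hEv⟩))⟩
          intro hq; rw [Sym2.eq_iff] at hq; tauto
    · intro e he'
      rcases Finset.mem_insert.mp he' with rfl | he'
      · exact ⟨i, by simp, hi⟩
      · exact hc.no_unsampled_edge _ (Finset.mem_erase.mp he').2
    · intro v hv
      have hvu1 : v ≠ u₁ := fun h => hu1VR (h ▸ hv)
      have hvj : v ≠ j := fun h => hj (h ▸ hv)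
      have hd := hc.degree_eq v hv
      have herase := degE_erase s(i, j) ESU he v
      rw [degE_insert _ _ h2]
      simp only [Sym2.mem_iff] at herase ⊢
      split_ifs at herase ⊢ <;> omega


end RDS
end

section
/- Let (G_SU, Z_SU) be a pair compatible with the observed data, let i, j ∈ V_R be vertices that are not adjacent in G_SU, and let u₁ ≠ u₂ be unsampled vertices (elements of U = V_SU \ V_R) with {i,u₁} ∈ E_SU and {j,u₂} ∈ E_SU. Construct G* by deleting the edges {i,u₁} and {j,u₂}, adding the edge {i,j}, and deleting each of u₁, u₂ that is left with no neighbor in V_R. Then (G*, Z*), where Z* is the restriction of Z_SU to the remaining vertices, is compatible with the observed data (G_R, d_R, Z_R). -/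
open Finset

namespace RDS

/-- Given a compatible pair, non-adjacent `i, j ∈ V_R`, and unsampled
vertices `u₁ ≠ u₂` with `{i,u₁}, {j,u₂} ∈ E_SU`: deleting the edges `{i,u₁}` and `{j,u₂}`,
adding the edge `{i,j}`, and deleting each of `u₁, u₂` that is left with no neighbor in
`V_R`, yields another pair compatible with the observed data (with the traits restricted
to the remaining vertices). -/
theorem swap_pendant_edges_for_internal_edge_compatible
    (VR : Finset ℕ) (ER : Finset (ℕ × ℕ)) (d : ℕ → ℕ) (ZR : ℕ → Bool)
    (VSU : Finset ℕ) (ESU : Edges) (Z : ℕ → Bool)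
    (hER : ∀ p ∈ ER, p.1 ∈ VR ∧ p.2 ∈ VR)
    (hc : Compat VR ER d ZR VSU ESU Z)
    (i j u₁ u₂ : ℕ)
    (hi : i ∈ VR) (hj : j ∈ VR) (hij : i ≠ j)
    (hnadj : s(i, j) ∉ ESU)
    (hu₁ : u₁ ∈ VSU) (hu₁' : u₁ ∉ VR)
    (hu₂ : u₂ ∈ VSU) (hu₂' : u₂ ∉ VR)
    (huu : u₁ ≠ u₂)
    (hiu₁ : s(i, u₁) ∈ ESU) (hju₂ : s(j, u₂) ∈ ESU)
    -- V_SU*: delete u₁ (resp. u₂) when it retains no neighbor in V_R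
    (VSU' : Finset ℕ)
    (hVSU' : VSU' =
      (let V₁ := if ((VR.erase i).filter (fun v => s(v, u₁) ∈ ESU)).Nonempty
                 then VSU else VSU.erase u₁;
       if ((VR.erase j).filter (fun v => s(v, u₂) ∈ ESU)).Nonempty
       then V₁ else V₁.erase u₂)) :
    Compat VR ER d ZR VSU'
      (insert s(i, j) ((ESU.erase s(i, u₁)).erase s(j, u₂)))
      Z := by
  obtain ⟨hl, hvr, hes, her, hta, hcov, hnue, hdeg⟩ := hc
  have hiu₁' : i ≠ u₁ := fun h => hu₁' (h ▸ hi)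
  have hju₂' : j ≠ u₂ := fun h => hu₂' (h ▸ hj)
  have hiu₂' : i ≠ u₂ := fun h => hu₂' (h ▸ hi)
  have hju₁' : j ≠ u₁ := fun h => hu₁' (h ▸ hj)
  -- membership description of VSU'
  have hmem : ∀ v, v ∈ VSU' ↔ v ∈ VSU ∧
      (v = u₁ → ((VR.erase i).filter (fun w => s(w, u₁) ∈ ESU)).Nonempty) ∧
      (v = u₂ → ((VR.erase j).filter (fun w => s(w, u₂) ∈ ESU)).Nonempty) := by
    intro v
    rw [hVSU']
    by_cases h1 : ((VR.erase i).filter (fun w => s(w, u₁) ∈ ESU)).Nonempty <;>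
      by_cases h2 : ((VR.erase j).filter (fun w => s(w, u₂) ∈ ESU)).Nonempty <;>
      simp only [h1, h2, if_true, if_false, Finset.mem_erase] <;>
      constructor <;> intro hh <;> tauto
  have hVRsub : VR ⊆ VSU' := by
    intro v hv
    rw [hmem]
    exact ⟨hvr hv, fun h => absurd hv (h ▸ hu₁'), fun h => absurd hv (h ▸ hu₂')⟩
  set E' : Edges := insert s(i, j) ((ESU.erase s(i, u₁)).erase s(j, u₂)) with hE'
  have hmemE : ∀ e, e ∈ E' ↔ e = s(i, j) ∨ (e ∈ ESU ∧ e ≠ s(i, u₁) ∧ e ≠ s(j, u₂)) := by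
    intro e
    simp only [hE', Finset.mem_insert, Finset.mem_erase]
    tauto
  refine ⟨?_, hVRsub, ?_, ?_, hta, ?_, ?_, ?_⟩
  · -- loopless
    intro e he
    rcases (hmemE e).1 he with h | ⟨h, -, -⟩
    · subst h; rw [Sym2.mk_isDiag_iff]; exact hij
    · exact hl e h
  · -- edges_subset
    intro e he v hv
    rcases (hmemE e).1 he with h | ⟨heE, he1, he2⟩
    · subst h
      rcases Sym2.mem_iff.1 hv with rfl | rfl
      · exact hVRsub hi
      · exact hVRsub hj
    · rw [hmem]
      refine ⟨hes e heE v hv, ?_, ?_⟩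
      · rintro rfl
        obtain ⟨w, hwe, hwVR⟩ := hnue e heE
        have hwv : w ≠ v := fun h => hu₁' (h ▸ hwVR)
        induction e using Sym2.ind with
        | _ a b =>
          rcases Sym2.mem_iff.1 hv with rfl | rfl <;>
            rcases Sym2.mem_iff.1 hwe with rfl | rfl
          · exact absurd rfl hwv
          · have hwi : w ≠ i := by
              rintro rfl
              exact he1 (by rw [Sym2.eq_swap])
            exact ⟨w, Finset.mem_filter.2 ⟨Finset.mem_erase.2 ⟨hwi, hwVR⟩,
              by rwa [Sym2.eq_swap]⟩⟩
          · have hwi : w ≠ i := by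
              rintro rfl
              exact he1 rfl
            exact ⟨w, Finset.mem_filter.2 ⟨Finset.mem_erase.2 ⟨hwi, hwVR⟩, heE⟩⟩
          · exact absurd rfl hwv
      · rintro rfl
        obtain ⟨w, hwe, hwVR⟩ := hnue e heE
        have hwv : w ≠ v := fun h => hu₂' (h ▸ hwVR)
        induction e using Sym2.ind with
        | _ a b =>
          rcases Sym2.mem_iff.1 hv with rfl | rfl <;>
            rcases Sym2.mem_iff.1 hwe with rfl | rfl
          · exact absurd rfl hwv
          · have hwj : w ≠ j := by
              rintro rfl
              exact he2 (by rw [Sym2.eq_swap])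
            exact ⟨w, Finset.mem_filter.2 ⟨Finset.mem_erase.2 ⟨hwj, hwVR⟩,
              by rwa [Sym2.eq_swap]⟩⟩
          · have hwj : w ≠ j := by
              rintro rfl
              exact he2 rfl
            exact ⟨w, Finset.mem_filter.2 ⟨Finset.mem_erase.2 ⟨hwj, hwVR⟩, heE⟩⟩
          · exact absurd rfl hwv
  · -- er_subset
    intro p hp
    obtain ⟨hp1, hp2⟩ := hER p hp
    rw [hmemE]
    refine Or.inr ⟨her p hp, ?_, ?_⟩
    · intro h
      rcases Sym2.eq_iff.1 h with ⟨-, h2⟩ | ⟨h1, -⟩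
      · exact hu₁' (h2 ▸ hp2)
      · exact hu₁' (h1 ▸ hp1)
    · intro h
      rcases Sym2.eq_iff.1 h with ⟨-, h2⟩ | ⟨h1, -⟩
      · exact hu₂' (h2 ▸ hp2)
      · exact hu₂' (h1 ▸ hp1)
  · -- covered
    intro u hu hunr
    obtain ⟨huV, hc1, hc2⟩ := (hmem u).1 hu
    by_cases hu1c : u = u₁
    · subst hu1c
      obtain ⟨w, hw⟩ := hc1 rfl
      obtain ⟨hwVR, hwE⟩ := Finset.mem_filter.1 hw
      obtain ⟨hwi, hwVR'⟩ := Finset.mem_erase.1 hwVR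
      refine ⟨w, hwVR', (hmemE _).2 (Or.inr ⟨by rwa [Sym2.eq_swap], ?_, ?_⟩)⟩
      · intro h
        rcases Sym2.eq_iff.1 h with ⟨h1, -⟩ | ⟨-, h2⟩
        · exact hu₁' (h1 ▸ hi)
        · exact hwi h2
      · intro h
        rcases Sym2.eq_iff.1 h with ⟨h1, -⟩ | ⟨h1, -⟩
        · exact hju₁' h1.symm
        · exact huu h1
    · by_cases hu2c : u = u₂
      · subst hu2c
        obtain ⟨w, hw⟩ := hc2 rfl
        obtain ⟨hwVR, hwE⟩ := Finset.mem_filter.1 hw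
        obtain ⟨hwj, hwVR'⟩ := Finset.mem_erase.1 hwVR
        refine ⟨w, hwVR', (hmemE _).2 (Or.inr ⟨by rwa [Sym2.eq_swap], ?_, ?_⟩)⟩
        · intro h
          rcases Sym2.eq_iff.1 h with ⟨h1, -⟩ | ⟨h1, -⟩
          · exact hiu₂' h1.symm
          · exact huu h1.symm
        · intro h
          rcases Sym2.eq_iff.1 h with ⟨h1, -⟩ | ⟨-, h3⟩
          · exact hu₂' (h1 ▸ hj)
          · exact hwj h3
      · obtain ⟨w, hwVR, hwE⟩ := hcov u huV hunr
        refine ⟨w, hwVR, (hmemE _).2 (Or.inr ⟨hwE, ?_, ?_⟩)⟩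
        · intro h
          rcases Sym2.eq_iff.1 h with ⟨h1, -⟩ | ⟨h1, -⟩
          · exact hunr (h1 ▸ hi)
          · exact hu1c h1
        · intro h
          rcases Sym2.eq_iff.1 h with ⟨h1, -⟩ | ⟨h1, -⟩
          · exact hunr (h1 ▸ hj)
          · exact hu2c h1
  · -- no_unsampled_edge
    intro e he
    rcases (hmemE e).1 he with h | ⟨heE, -, -⟩
    · exact ⟨i, h ▸ Sym2.mem_mk_left i j, hi⟩
    · exact hnue e heE
  · -- degree_eq
    intro v hv
    have hvu₁ : v ≠ u₁ := fun h => hu₁' (h ▸ hv)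
    have hvu₂ : v ≠ u₂ := fun h => hu₂' (h ▸ hv)
    rw [← hdeg v hv]
    simp only [degE, hE', Finset.filter_insert, Finset.filter_erase]
    by_cases hvi : v = i
    · subst hvi
      rw [if_pos (Sym2.mem_mk_left v j)]
      have hm1 : s(v, u₁) ∈ ESU.filter (fun e => v ∈ e) :=
        Finset.mem_filter.2 ⟨hiu₁, Sym2.mem_mk_left _ _⟩
      have hm2 : s(j, u₂) ∉ (ESU.filter (fun e => v ∈ e)).erase s(v, u₁) := by
        intro h
        rcases Sym2.mem_iff.1 (Finset.mem_filter.1 (Finset.mem_of_mem_erase h)).2 with h' | h'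
        · exact hij h'
        · exact hvu₂ h'
      rw [Finset.erase_eq_of_notMem hm2,
        Finset.card_insert_of_notMem
          (fun h => hnadj (Finset.mem_filter.1 (Finset.mem_of_mem_erase h)).1),
        Finset.card_erase_of_mem hm1]
      have hpos : 0 < (ESU.filter (fun e => v ∈ e)).card := Finset.card_pos.2 ⟨_, hm1⟩
      omega
    · by_cases hvj : v = j
      · subst hvj
        rw [if_pos (Sym2.mem_mk_right i v)]
        have hm1 : s(i, u₁) ∉ ESU.filter (fun e => v ∈ e) := by
          intro h
          rcases Sym2.mem_iff.1 (Finset.mem_filter.1 h).2 with h' | h'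
          · exact hvi h'
          · exact hvu₁ h'
        have hm2 : s(v, u₂) ∈ ESU.filter (fun e => v ∈ e) :=
          Finset.mem_filter.2 ⟨hju₂, Sym2.mem_mk_left _ _⟩
        rw [Finset.erase_eq_of_notMem hm1,
          Finset.card_insert_of_notMem
            (fun h => hnadj (Finset.mem_filter.1 (Finset.mem_of_mem_erase h)).1),
          Finset.card_erase_of_mem hm2]
        have hpos : 0 < (ESU.filter (fun e => v ∈ e)).card := Finset.card_pos.2 ⟨_, hm2⟩
        omega
      · rw [if_neg (by rw [Sym2.mem_iff]; push_neg; exact ⟨hvi, hvj⟩)]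
        have hm1 : s(i, u₁) ∉ ESU.filter (fun e => v ∈ e) := by
          intro h
          rcases Sym2.mem_iff.1 (Finset.mem_filter.1 h).2 with h' | h'
          · exact hvi h'
          · exact hvu₁ h'
        have hm2 : s(j, u₂) ∉ ESU.filter (fun e => v ∈ e) := by
          intro h
          rcases Sym2.mem_iff.1 (Finset.mem_filter.1 h).2 with h' | h'
          · exact hvj h'
          · exact hvu₂ h'
        rw [Finset.erase_eq_of_notMem hm1, Finset.erase_eq_of_notMem hm2]

end RDS
end
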